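/- arXiv:1305.0089 — 6 statements merged into one kernel-verified Lean document; each statement's English description precedes it below -/
import Mathlib

section
/- For all indices 0 ≤ i, j ≤ n with i ≠ j, the biorthogonality relation ∫_α^β λ_i(x) φ_j(x) dx = 0 holds. -/
open intervalIntegral

/-- The standard hat (piecewise linear nodal) basis function `φ_i` associated with the
partition `x 0 < x 1 < ... < x n`.  The branch on `[x_{i-1}, x_i]` is omitted when `i = 0`
and the branch on `[x_i, x_{i+1}]` is omitted when `i = n`. -/
noncomputable def hatFn (x : ℕ → ℝ) (n i : ℕ) : ℝ → ℝ := fun t =>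
  if 0 < i ∧ x (i-1) ≤ t ∧ t ≤ x i then (t - x (i-1)) / (x i - x (i-1))
  else if i < n ∧ x i ≤ t ∧ t ≤ x (i+1) then (x (i+1) - t) / (x (i+1) - x i)
  else 0

/-- The biorthogonal basis function `λ_i`. -/
noncomputable def biorthFn (x : ℕ → ℝ) (n i : ℕ) : ℝ → ℝ := fun t =>
  if 0 < i ∧ x (i-1) ≤ t ∧ t < x i then (2*(t - x (i-1)) + (t - x i)) / (x i - x (i-1))
  else if i < n ∧ x i ≤ t ∧ t < x (i+1) then (2*(t - x (i+1)) + (t - x i)) / (x i - x (i+1))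
  else 0

/-- The piecewise derivative `u_h'` of the interpolant `u_h = Σ_j u(x_j) φ_j`:
on each open subinterval `(x_j, x_{j+1})` it is the constant
`(u(x_{j+1}) - u(x_j)) / (x_{j+1} - x_j)`, and it is (arbitrarily) `0` at grid points and
outside `[x 0, x n]`. -/
noncomputable def interpDeriv (x : ℕ → ℝ) (n : ℕ) (u : ℝ → ℝ) : ℝ → ℝ := fun t =>
  ∑ j ∈ Finset.range n,
    if x j < t ∧ t < x (j+1) then (u (x (j+1)) - u (x j)) / (x (j+1) - x j) else 0

/-- The recovered gradient value
`g_i = (∫_α^β u_h' λ_i dx) / (∫_α^β φ_i λ_i dx)` with `α = x 0`, `β = x n`. -/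
noncomputable def recGrad (x : ℕ → ℝ) (n : ℕ) (u : ℝ → ℝ) (i : ℕ) : ℝ :=
  (∫ t in (x 0)..(x n), interpDeriv x n u t * biorthFn x n i t) /
  (∫ t in (x 0)..(x n), hatFn x n i t * biorthFn x n i t)

section Aux

open MeasureTheory Set

lemma biorth_aux_int1 (a b : ℝ) (hab : a < b) :
    (∫ t in a..b, (2*(t-b)+(t-a))/(a-b) * ((t-a)/(b-a))) = 0 := by
  have hne : (a-b)*(b-a) ≠ 0 :=
    mul_ne_zero (by linarith) (by linarith)
  have hderiv : ∀ t ∈ Set.uIcc a b,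
      HasDerivAt (fun t => ((t-a)^2*(t-b))/((a-b)*(b-a)))
        ((2*(t-b)+(t-a))/(a-b) * ((t-a)/(b-a))) t := by
    intro t _
    have ha : HasDerivAt (fun t : ℝ => t - a) 1 t := (hasDerivAt_id t).sub_const a
    have hb : HasDerivAt (fun t : ℝ => t - b) 1 t := (hasDerivAt_id t).sub_const b
    have h1 : HasDerivAt (fun t => (t-a)^2*(t-b)) (2*(t-a)*(t-b) + (t-a)^2) t := by
      have := (ha.fun_pow 2).fun_mul hb
      refine this.congr_deriv ?_
      ring
    have := h1.div_const ((a-b)*(b-a))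
    refine this.congr_deriv ?_
    field_simp
  have h := integral_eq_sub_of_hasDerivAt hderiv
    (by apply Continuous.intervalIntegrable; continuity)
  rw [h]; simp

lemma biorth_aux_int2 (a b : ℝ) (hab : a < b) :
    (∫ t in a..b, (2*(t-a)+(t-b))/(b-a) * ((b-t)/(b-a))) = 0 := by
  have hne : (b-a)*(b-a) ≠ 0 := mul_ne_zero (by linarith) (by linarith)
  have hderiv : ∀ t ∈ Set.uIcc a b,
      HasDerivAt (fun t => -((t-b)^2*(t-a))/((b-a)*(b-a)))
        ((2*(t-a)+(t-b))/(b-a) * ((b-t)/(b-a))) t := by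
    intro t _
    have ha : HasDerivAt (fun t : ℝ => t - a) 1 t := (hasDerivAt_id t).sub_const a
    have hb : HasDerivAt (fun t : ℝ => t - b) 1 t := (hasDerivAt_id t).sub_const b
    have h1 : HasDerivAt (fun t => -((t-b)^2*(t-a))) (-(2*(t-b)*(t-a) + (t-b)^2)) t := by
      have := ((hb.fun_pow 2).fun_mul ha).fun_neg
      refine this.congr_deriv ?_
      ring
    have := h1.div_const ((b-a)*(b-a))
    refine this.congr_deriv ?_
    field_simp
    ring
  have h := integral_eq_sub_of_hasDerivAt hderiv
    (by apply Continuous.intervalIntegrable; continuity)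
  rw [h]; simp

end Aux

/-- biorthogonality: for all `0 ≤ i, j ≤ n` with `i ≠ j`,
`∫_α^β λ_i(x) φ_j(x) dx = 0`. -/
theorem biorthogonality_offdiagonal (n : ℕ) (x : ℕ → ℝ) (hn : 2 ≤ n)
    (hx : ∀ i < n, x i < x (i+1)) :
    ∀ i j : ℕ, i ≤ n → j ≤ n → i ≠ j →
      (∫ t in (x 0)..(x n), biorthFn x n i t * hatFn x n j t) = 0 := by
  intro i j hi hj hij
  -- monotonicity helpers
  have mono_le : ∀ a b : ℕ, a ≤ b → b ≤ n → x a ≤ x b := by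
    intro a b hab hbn
    induction b with
    | zero =>
      have : a = 0 := Nat.le_zero.mp hab
      subst this; exact le_refl _
    | succ m ih =>
      rcases Nat.eq_or_lt_of_le hab with h | h
      · subst h; exact le_refl _
      · exact le_trans (ih (by omega) (by omega)) (hx m (by omega)).le
  have key2 : ∀ a b : ℕ, a ≤ n → b ≤ n → x a < x b → a < b := by
    intro a b ha hb h
    by_contra hc
    push_neg at hc
    exact absurd (mono_le b a hc ha) (not_le.mpr h)
  set f : ℝ → ℝ := fun t => biorthFn x n i t * hatFn x n j t with hf
  suffices h : ∀ k < n, IntervalIntegrable f MeasureTheory.volume (x k) (x (k+1)) ∧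
      (∫ t in (x k)..(x (k+1)), f t) = 0 by
    rw [← intervalIntegral.sum_integral_adjacent_intervals (fun k hk => (h k hk).1)]
    exact Finset.sum_eq_zero fun k hk => (h k (Finset.mem_range.1 hk)).2
  intro k hk
  have hklt : x k < x (k+1) := hx k hk
  have hkn : k ≤ n := le_of_lt hk
  have hk1n : k + 1 ≤ n := hk
  -- pointwise forms on the open interval
  have lam_eq : ∀ t ∈ Set.Ioo (x k) (x (k+1)),
      biorthFn x n i t =
        if i = k+1 then (2*(t - x (i-1)) + (t - x i)) / (x i - x (i-1))
        else if i = k then (2*(t - x (i+1)) + (t - x i)) / (x i - x (i+1))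
        else 0 := by
    rintro t ⟨ht1, ht2⟩
    by_cases h1 : i = k+1
    · subst h1
      rw [if_pos rfl]
      simp only [biorthFn]
      rw [if_pos ⟨Nat.succ_pos k, by simpa using ht1.le, by simpa using ht2⟩]
    by_cases h2 : i = k
    · subst h2
      rw [if_neg h1, if_pos rfl]
      simp only [biorthFn]
      rw [if_neg (by rintro ⟨-, -, hlt⟩; linarith), if_pos ⟨hk, ht1.le, ht2⟩]
    rw [if_neg h1, if_neg h2]
    simp only [biorthFn]
    rw [if_neg, if_neg]
    · rintro ⟨hin, hle, hlt⟩
      have c1 : i < k + 1 := key2 i (k+1) (by omega) hk1n (lt_of_le_of_lt hle ht2)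
      have c2 : k < i + 1 := key2 k (i+1) hkn (by omega) (lt_trans ht1 hlt)
      omega
    · rintro ⟨hi0, hle, hlt⟩
      have hin : i ≤ n := hi
      have c1 : k < i := key2 k i hkn hin (lt_trans ht1 hlt)
      have c2 : i - 1 < k + 1 := key2 (i-1) (k+1) (by omega) hk1n (lt_of_le_of_lt hle ht2)
      omega
  have hat_eq : ∀ t ∈ Set.Ioo (x k) (x (k+1)),
      hatFn x n j t =
        if j = k+1 then (t - x (j-1)) / (x j - x (j-1))
        else if j = k then (x (j+1) - t) / (x (j+1) - x j)
        else 0 := by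
    rintro t ⟨ht1, ht2⟩
    by_cases h1 : j = k+1
    · subst h1
      rw [if_pos rfl]
      simp only [hatFn]
      rw [if_pos ⟨Nat.succ_pos k, by simpa using ht1.le, ht2.le⟩]
    by_cases h2 : j = k
    · subst h2
      rw [if_neg h1, if_pos rfl]
      simp only [hatFn]
      rw [if_neg (by rintro ⟨-, -, hle⟩; linarith), if_pos ⟨hk, ht1.le, ht2.le⟩]
    rw [if_neg h1, if_neg h2]
    simp only [hatFn]
    rw [if_neg, if_neg]
    · rintro ⟨hjn, hle, hle2⟩
      have c1 : j < k + 1 := key2 j (k+1) hj hk1n (lt_of_le_of_lt hle ht2)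
      have c2 : k < j + 1 := key2 k (j+1) hkn (by omega) (lt_of_lt_of_le ht1 hle2)
      omega
    · rintro ⟨hj0, hle, hle2⟩
      have c1 : k < j := key2 k j hkn hj (lt_of_lt_of_le ht1 hle2)
      have c2 : j - 1 < k + 1 := key2 (j-1) (k+1) (by omega) hk1n (lt_of_le_of_lt hle ht2)
      omega
  -- the continuous model function g on this piece
  have main : ∃ g : ℝ → ℝ, Continuous g ∧ (∀ t ∈ Set.Ioo (x k) (x (k+1)), f t = g t) ∧
      (∫ t in (x k)..(x (k+1)), g t) = 0 := by
    by_cases hA : i = k ∧ j = k + 1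
    · obtain ⟨hik, hjk⟩ := hA
      refine ⟨fun t => (2*(t - x (i+1)) + (t - x i)) / (x i - x (i+1)) *
        ((t - x (j-1)) / (x j - x (j-1))), by continuity, ?_, ?_⟩
      · intro t ht
        rw [hf]
        simp only
        rw [lam_eq t ht, hat_eq t ht, if_neg (by omega), if_pos hik, if_pos hjk]
      · subst hik hjk
        simp only [Nat.add_sub_cancel]
        exact biorth_aux_int1 (x i) (x (i+1)) hklt
    by_cases hB : i = k + 1 ∧ j = k
    · obtain ⟨hik, hjk⟩ := hB
      refine ⟨fun t => (2*(t - x (i-1)) + (t - x i)) / (x i - x (i-1)) *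
        ((x (j+1) - t) / (x (j+1) - x j)), by continuity, ?_, ?_⟩
      · intro t ht
        rw [hf]
        simp only
        rw [lam_eq t ht, hat_eq t ht, if_pos hik, if_neg (by omega), if_pos hjk]
      · subst hik hjk
        simp only [Nat.add_sub_cancel]
        exact biorth_aux_int2 (x j) (x (j+1)) hklt
    · refine ⟨fun _ => 0, continuous_const, ?_, by simp⟩
      intro t ht
      rw [hf]
      simp only
      rw [lam_eq t ht, hat_eq t ht]
      by_cases h1 : i = k+1 <;> by_cases h2 : j = k+1 <;>
        by_cases h3 : i = k <;> by_cases h4 : j = k <;>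
        simp_all <;> omega
  obtain ⟨g, hgc, hfg, hg0⟩ := main
  have hae : ∀ᵐ t ∂(MeasureTheory.volume : MeasureTheory.Measure ℝ),
      t ∈ Set.uIoc (x k) (x (k+1)) → f t = g t := by
    have hne : ∀ᵐ t : ℝ ∂MeasureTheory.volume, t ≠ x (k+1) := by
      simp [MeasureTheory.ae_iff]
    filter_upwards [hne] with t htne hmem
    rw [Set.uIoc_of_le hklt.le] at hmem
    exact hfg t ⟨hmem.1, lt_of_le_of_ne hmem.2 htne⟩
  constructor
  · refine (hgc.intervalIntegrable _ _).congr_ae ?_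
    exact ((MeasureTheory.ae_restrict_iff' measurableSet_uIoc).2 hae).mono fun t ht => ht.symm
  · rw [intervalIntegral.integral_congr_ae hae, hg0]
end

section
/- Let u : ℝ → ℝ be any function. For every interior index 1 ≤ i ≤ n−1, one has ∫_α^β u_h'(x) λ_i(x) dx = (u(x_{i+1}) − u(x_{i−1}))/2, where u_h' is the piecewise derivative of the interpolant u_h (defined at every non-grid point, constant on each subinterval). -/
open intervalIntegral

/-- Auxiliary: the continuous function equal a.e. to `u_h' λ_i` on `(x_j, x_{j+1})`. -/
noncomputable def gAux (x : ℕ → ℝ) (u : ℝ → ℝ) (i j : ℕ) : ℝ → ℝ := fun t =>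
  if j = i - 1 then
    ((u (x i) - u (x (i-1))) / (x i - x (i-1))) * ((3*t - (2*x (i-1) + x i)) / (x i - x (i-1)))
  else if j = i then
    ((u (x (i+1)) - u (x i)) / (x (i+1) - x i)) * ((3*t - (2*x (i+1) + x i)) / (x i - x (i+1)))
  else 0

lemma gAux_continuous (x : ℕ → ℝ) (u : ℝ → ℝ) (i j : ℕ) : Continuous (gAux x u i j) := by
  unfold gAux
  split_ifs <;> fun_prop

lemma integral_linear (a b p q : ℝ) :
    (∫ t in a..b, (p * t + q)) = p * (b^2 - a^2) / 2 + q * (b - a) := by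
  rw [intervalIntegral.integral_add
      (((by fun_prop : Continuous fun t : ℝ => p * t)).intervalIntegrable _ _)
      (intervalIntegrable_const), intervalIntegral.integral_const_mul, integral_id,
      intervalIntegral.integral_const, smul_eq_mul]
  ring

/-- for any `u : ℝ → ℝ` and every interior index `1 ≤ i ≤ n-1`,
`∫_α^β u_h'(x) λ_i(x) dx = (u(x_{i+1}) - u(x_{i-1})) / 2`. -/
theorem interpDeriv_integral_against_biorth (n : ℕ) (x : ℕ → ℝ) (hn : 2 ≤ n)
    (hx : ∀ i < n, x i < x (i+1)) (u : ℝ → ℝ) :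
    ∀ i : ℕ, 1 ≤ i → i < n →
      (∫ t in (x 0)..(x n), interpDeriv x n u t * biorthFn x n i t)
        = (u (x (i+1)) - u (x (i-1))) / 2 := by
  intro i hi1 hin
  have hi11 : i - 1 + 1 = i := Nat.sub_add_cancel hi1
  -- strict monotonicity
  have hmono : ∀ k ≤ n, ∀ j < k, x j < x k := by
    intro k
    induction k with
    | zero => intro _ j hj; omega
    | succ m ih =>
      intro hk j hj
      have hm : x m < x (m+1) := hx m (by omega)
      rcases Nat.lt_succ_iff_lt_or_eq.mp hj with h | h
      · exact (ih (by omega) j h).trans hm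
      · subst h; exact hm
  have hle : ∀ j k : ℕ, j ≤ k → k ≤ n → x j ≤ x k := by
    intro j k hjk hk
    rcases eq_or_lt_of_le hjk with h | h
    · subst h; exact le_rfl
    · exact (hmono k hk j h).le
  -- pointwise identity on open subintervals
  have hkey : ∀ j < n, ∀ t ∈ Set.Ioo (x j) (x (j+1)),
      interpDeriv x n u t * biorthFn x n i t = gAux x u i j t := by
    intro j hj t ht
    have hD : interpDeriv x n u t = (u (x (j+1)) - u (x j)) / (x (j+1) - x j) := by
      unfold interpDeriv
      rw [Finset.sum_eq_single_of_mem j (Finset.mem_range.mpr hj)]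
      · rw [if_pos ⟨ht.1, ht.2⟩]
      · intro k hk hne
        rw [if_neg]
        rintro ⟨h1, h2⟩
        rcases lt_or_gt_of_ne hne with h | h
        · have : x (k+1) ≤ x j := hle (k+1) j (by omega) (by omega)
          linarith [ht.1]
        · have hkn : k < n := Finset.mem_range.mp hk
          have : x (j+1) ≤ x k := hle (j+1) k (by omega) hkn.le
          linarith [ht.2]
    rw [hD]
    rcases eq_or_ne j (i-1) with hji | hji
    · simp only [hji] at ht ⊢
      rw [hi11] at ht ⊢
      have hB : biorthFn x n i t
          = (2*(t - x (i-1)) + (t - x i)) / (x i - x (i-1)) := by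
        unfold biorthFn
        rw [if_pos ⟨hi1, ht.1.le, ht.2⟩]
      rw [hB]
      unfold gAux
      rw [if_pos rfl]
      ring
    · rcases eq_or_ne j i with hji' | hji'
      · simp only [hji'] at ht ⊢
        have hB : biorthFn x n i t
            = (2*(t - x (i+1)) + (t - x i)) / (x i - x (i+1)) := by
          unfold biorthFn
          rw [if_neg, if_pos ⟨hin, ht.1.le, ht.2⟩]
          
          rintro ⟨_, _, hlt⟩
          exact absurd ht.1 (not_lt.mpr hlt.le)
        rw [hB]
        unfold gAux
        rw [if_neg (by omega : ¬ i = i - 1), if_pos rfl]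
        ring
      · -- far case: biorthFn vanishes
        have hB : biorthFn x n i t = 0 := by
          unfold biorthFn
          rcases lt_or_gt_of_ne hji with h | h
          · -- j < i - 1, so j + 1 ≤ i - 1
            have h1 : x (j+1) ≤ x (i-1) := hle (j+1) (i-1) (by omega) (by omega)
            have h2 : x (i-1) < x i := by
              have := hmono i (by omega) (i-1) (by omega)
              exact this
            rw [if_neg, if_neg]
            · rintro ⟨_, hle', _⟩; linarith [ht.2]
            · rintro ⟨_, hle', _⟩; linarith [ht.2]
          · -- j > i - 1 and j ≠ i, so j ≥ i + 1
            have h1 : x (i+1) ≤ x j := hle (i+1) j (by omega) (by omega)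
            have h2 : x i < x (i+1) := hx i hin
            rw [if_neg, if_neg]
            · rintro ⟨_, _, hlt⟩; linarith [ht.1]
            · rintro ⟨_, _, hlt⟩; linarith [ht.1]
        rw [hB]
        unfold gAux
        rw [if_neg hji, if_neg hji']
        ring
  -- a.e. identity on Ioc subintervals
  have haej : ∀ j < n,
      (fun t => interpDeriv x n u t * biorthFn x n i t)
        =ᵐ[MeasureTheory.volume.restrict (Set.Ioc (x j) (x (j+1)))] gAux x u i j := by
    intro j hj
    have h0 : MeasureTheory.volume ({x (j+1)} : Set ℝ) = 0 := MeasureTheory.measure_singleton _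
    refine (MeasureTheory.ae_restrict_iff' measurableSet_Ioc).mpr ?_
    filter_upwards [MeasureTheory.measure_eq_zero_iff_ae_notMem.mp h0] with t ht hmem
    exact hkey j hj t ⟨hmem.1, lt_of_le_of_ne hmem.2 ht⟩
  have hint : ∀ j < n, IntervalIntegrable
      (fun t => interpDeriv x n u t * biorthFn x n i t) MeasureTheory.volume (x j) (x (j+1)) := by
    intro j hj
    rw [intervalIntegrable_iff_integrableOn_Ioc_of_le (hx j hj).le]
    exact ((gAux_continuous x u i j).integrableOn_Ioc).congr (haej j hj).symm
  rw [← intervalIntegral.sum_integral_adjacent_intervals (fun j hj => hint j hj)]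
  have hab : x (i-1) < x i := hmono i (by omega) (i-1) (by omega)
  have hbc : x i < x (i+1) := hx i hin
  have hval : ∀ j ∈ Finset.range n,
      (∫ t in (x j)..(x (j+1)), interpDeriv x n u t * biorthFn x n i t)
        = (if j = i-1 then (u (x i) - u (x (i-1)))/2 else 0)
          + (if j = i then (u (x (i+1)) - u (x i))/2 else 0) := by
    intro j hj
    rw [Finset.mem_range] at hj
    have heq : (∫ t in (x j)..(x (j+1)), interpDeriv x n u t * biorthFn x n i t)
        = ∫ t in (x j)..(x (j+1)), gAux x u i j t := by
      apply intervalIntegral.integral_congr_ae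
      have h0 : MeasureTheory.volume ({x (j+1)} : Set ℝ) = 0 := MeasureTheory.measure_singleton _
      filter_upwards [MeasureTheory.measure_eq_zero_iff_ae_notMem.mp h0] with t ht hmem
      rw [Set.uIoc_of_le (hx j hj).le] at hmem
      exact hkey j hj t ⟨hmem.1, lt_of_le_of_ne hmem.2 ht⟩
    rw [heq]
    rcases eq_or_ne j (i-1) with hji | hji
    · simp only [hji, hi11]
      rw [if_pos trivial, if_neg (by omega : ¬ i - 1 = i), add_zero]
      have : (fun t => gAux x u i (i-1) t)
          = fun t => (((u (x i) - u (x (i-1))) / (x i - x (i-1))) * 3 / (x i - x (i-1))) * t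
            + (-(((u (x i) - u (x (i-1))) / (x i - x (i-1))) * (2*x (i-1) + x i) / (x i - x (i-1)))) := by
        funext t
        unfold gAux
        rw [if_pos rfl]
        ring
      rw [this, integral_linear]
      have h1 : x i - x (i-1) ≠ 0 := by linarith
      field_simp
      ring
    · rcases eq_or_ne j i with hji' | hji'
      · simp only [hji']
        rw [if_pos trivial, if_neg (by omega : ¬ i = i - 1), zero_add]
        have : (fun t => gAux x u i i t)
            = fun t => (((u (x (i+1)) - u (x i)) / (x (i+1) - x i)) * 3 / (x i - x (i+1))) * t
              + (-(((u (x (i+1)) - u (x i)) / (x (i+1) - x i)) * (2*x (i+1) + x i) / (x i - x (i+1)))) := by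
          funext t
          unfold gAux
          rw [if_neg (by omega : ¬ i = i - 1), if_pos rfl]
          ring
        rw [this, integral_linear]
        have h1 : x (i+1) - x i ≠ 0 := by linarith
        have h2 : x i - x (i+1) ≠ 0 := by linarith
        field_simp
        ring
      · rw [if_neg hji, if_neg hji', add_zero]
        have : (fun t => gAux x u i j t) = fun _ => (0:ℝ) := by
          funext t; unfold gAux; rw [if_neg hji, if_neg hji']
        rw [this, intervalIntegral.integral_const, smul_zero]
  rw [Finset.sum_congr rfl hval, Finset.sum_add_distrib,
    Finset.sum_ite_eq' (Finset.range n) (i-1), Finset.sum_ite_eq' (Finset.range n) i,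
    if_pos (Finset.mem_range.mpr (by omega)), if_pos (Finset.mem_range.mpr hin)]
  ring
end

section
/- (Theorem 1, interior case) Let u : ℝ → ℝ be any function. For every interior index 1 ≤ i ≤ n−1, the recovered gradient value satisfies g_i = (u(x_{i+1}) − u(x_{i−1}))/(x_{i+1} − x_{i−1}). -/
open intervalIntegral
open MeasureTheory


lemma hasDerivAt_cubic (p q r t : ℝ) :
    HasDerivAt (fun t : ℝ => p*t^3 + q*t^2 + r*t) (3*p*t^2 + 2*q*t + r) t := by
  have h := (((hasDerivAt_pow 3 t).const_mul p).add ((hasDerivAt_pow 2 t).const_mul q)).add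
    ((hasDerivAt_id t).const_mul r)
  refine h.congr_deriv ?_
  push_cast
  ring

lemma piece_eq {f g : ℝ → ℝ} {a b : ℝ} (hab : a ≤ b)
    (h : ∀ t ∈ Set.Ioo a b, f t = g t) (hg : IntervalIntegrable g volume a b) :
    IntervalIntegrable f volume a b ∧ (∫ t in a..b, f t) = ∫ t in a..b, g t := by
  have hb : (volume : Measure ℝ) {b} = 0 := measure_singleton b
  constructor
  · rw [intervalIntegrable_iff_integrableOn_Ioc_of_le hab] at hg ⊢
    have hae : g =ᵐ[volume.restrict (Set.Ioc a b)] f := by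
      filter_upwards [ae_restrict_mem measurableSet_Ioc,
        ae_restrict_of_ae (compl_mem_ae_iff.mpr hb)] with t ht1 ht2
      exact (h t ⟨ht1.1, lt_of_le_of_ne ht1.2 (by simpa using ht2)⟩).symm
    exact hg.congr hae
  · apply intervalIntegral.integral_congr_ae
    filter_upwards [compl_mem_ae_iff.mpr hb] with t ht hmem
    rw [Set.uIoc_of_le hab] at hmem
    exact h t ⟨hmem.1, lt_of_le_of_ne hmem.2 (by simpa using ht)⟩

lemma evalA (a b s : ℝ) (hab : a < b) :
    ∫ t in a..b, s * ((2*(t-a)+(t-b))/(b-a)) = s * (b-a) / 2 := by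
  have hne : b - a ≠ 0 := sub_ne_zero.mpr hab.ne'
  rw [intervalIntegral.integral_eq_sub_of_hasDerivAt
    (f := fun t => ((0:ℝ)*t^3 + (s*(3/2))*t^2 + (-(s*(2*a+b)))*t)/(b-a))
    (fun t _ => by
      have := (hasDerivAt_cubic 0 (s*(3/2)) (-(s*(2*a+b))) t).div_const (b-a)
      refine this.congr_deriv ?_
      field_simp
      ring)
    (by apply Continuous.intervalIntegrable; fun_prop)]
  field_simp
  ring

lemma evalB (b c s : ℝ) (hbc : b < c) :
    ∫ t in b..c, s * ((2*(t-c)+(t-b))/(b-c)) = s * (c-b) / 2 := by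
  have hne : b - c ≠ 0 := sub_ne_zero.mpr hbc.ne
  rw [intervalIntegral.integral_eq_sub_of_hasDerivAt
    (f := fun t => ((0:ℝ)*t^3 + (s*(3/2))*t^2 + (-(s*(2*c+b)))*t)/(b-c))
    (fun t _ => by
      have := (hasDerivAt_cubic 0 (s*(3/2)) (-(s*(2*c+b))) t).div_const (b-c)
      refine this.congr_deriv ?_
      field_simp
      ring)
    (by apply Continuous.intervalIntegrable; fun_prop)]
  field_simp
  ring

lemma evalC (a b : ℝ) (hab : a < b) :
    ∫ t in a..b, ((t-a)/(b-a)) * ((2*(t-a)+(t-b))/(b-a)) = (b-a) / 2 := by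
  have hne : b - a ≠ 0 := sub_ne_zero.mpr hab.ne'
  rw [intervalIntegral.integral_eq_sub_of_hasDerivAt
    (f := fun t => ((1:ℝ)*t^3 + (-((5*a+b)/2))*t^2 + (2*a^2+a*b)*t)/(b-a)^2)
    (fun t _ => by
      have := (hasDerivAt_cubic 1 (-((5*a+b)/2)) (2*a^2+a*b) t).div_const ((b-a)^2)
      refine this.congr_deriv ?_
      field_simp
      ring)
    (by apply Continuous.intervalIntegrable; fun_prop)]
  field_simp
  ring

lemma evalD (b c : ℝ) (hbc : b < c) :
    ∫ t in b..c, ((c-t)/(c-b)) * ((2*(t-c)+(t-b))/(b-c)) = (c-b) / 2 := by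
  have hne : c - b ≠ 0 := sub_ne_zero.mpr hbc.ne'
  have hne' : b - c ≠ 0 := sub_ne_zero.mpr hbc.ne
  rw [intervalIntegral.integral_eq_sub_of_hasDerivAt
    (f := fun t => ((1:ℝ)*t^3 + (-((5*c+b)/2))*t^2 + (2*c^2+b*c)*t)/(c-b)^2)
    (fun t _ => by
      have := (hasDerivAt_cubic 1 (-((5*c+b)/2)) (2*c^2+b*c) t).div_const ((c-b)^2)
      refine this.congr_deriv ?_
      field_simp
      ring)
    (by apply Continuous.intervalIntegrable; fun_prop)]
  field_simp
  ring

/-- Theorem 1, interior case: for any `u : ℝ → ℝ` and every interior index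
`1 ≤ i ≤ n-1`, `g_i = (u(x_{i+1}) - u(x_{i-1})) / (x_{i+1} - x_{i-1})`. -/
theorem recGrad_interior (n : ℕ) (x : ℕ → ℝ) (hn : 2 ≤ n)
    (hx : ∀ i < n, x i < x (i+1)) (u : ℝ → ℝ) :
    ∀ i : ℕ, 1 ≤ i → i < n →
      recGrad x n u i = (u (x (i+1)) - u (x (i-1))) / (x (i+1) - x (i-1)) := by
  -- monotonicity
  have hmono : ∀ k ≤ n, ∀ j < k, x j < x k := by
    intro k hk
    induction k with
    | zero => intro j hj; omega
    | succ m ih =>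
      intro j hj
      have hxm := hx m (by omega)
      rcases Nat.lt_or_ge j m with h | h
      · exact lt_trans (ih (by omega) j h) hxm
      · have : j = m := by omega
        rw [this]; exact hxm
  have hle : ∀ j k, j ≤ k → k ≤ n → x j ≤ x k := by
    intro j k hjk hk
    rcases Nat.lt_or_ge j k with h | h
    · exact (hmono k hk j h).le
    · have : j = k := by omega
      rw [this]
  intro i hi1 hin
  have hii : i - 1 + 1 = i := by omega
  have hab : x (i-1) < x i := by have := hx (i-1) (by omega); rwa [hii] at this
  have hbc : x i < x (i+1) := hx i hin
  have hac : x (i-1) < x (i+1) := hab.trans hbc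
  set a := x (i-1) with ha
  set b := x i with hb
  set c := x (i+1) with hc
  -- numerator pieces
  have numPiece : ∀ k < n,
      IntervalIntegrable (fun t => interpDeriv x n u t * biorthFn x n i t) volume (x k) (x (k+1)) ∧
      (∫ t in (x k)..(x (k+1)), interpDeriv x n u t * biorthFn x n i t) =
        (if k = i-1 then (u b - u a)/2 else if k = i then (u c - u b)/2 else 0) := by
    intro k hk
    have hkk : x k < x (k+1) := hx k hk
    by_cases hk1 : k = i - 1
    · have hxk : x k = a := by rw [hk1, ha]
      have hxk1 : x (k+1) = b := by rw [hk1, hii, hb]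
      have hptw : ∀ t ∈ Set.Ioo (x k) (x (k+1)),
          interpDeriv x n u t * biorthFn x n i t
            = ((u b - u a)/(b - a)) * ((2*(t-a)+(t-b))/(b-a)) := by
        intro t ht
        rw [hxk, hxk1] at ht
        have hbio : biorthFn x n i t = (2*(t-a)+(t-b))/(b-a) := by
          rw [biorthFn, if_pos ⟨by omega, ht.1.le, ht.2⟩]
        have hid : interpDeriv x n u t = (u b - u a)/(b - a) := by
          rw [interpDeriv]
          rw [Finset.sum_eq_single_of_mem (i-1) (Finset.mem_range.mpr (by omega))]
          · rw [if_pos ⟨by rw [← ha]; exact ht.1, by rw [hii, ← hb]; exact ht.2⟩, hii]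
          · intro j hj hji
            rw [if_neg]
            rintro ⟨h1, h2⟩
            rcases Nat.lt_or_ge j (i-1) with hlt | hge
            · have : x (j+1) ≤ a := hle (j+1) (i-1) (by omega) (by omega)
              exact absurd (h2.trans_le this) (not_lt.mpr ht.1.le)
            · have hgi : i ≤ j := by omega
              have : b ≤ x j := hle i j hgi (Finset.mem_range.mp hj).le
              exact absurd (this.trans_lt h1) (not_lt.mpr ht.2.le)
        rw [hbio, hid]
      have := piece_eq hkk.le hptw (by apply Continuous.intervalIntegrable; fun_prop)
      rw [if_pos hk1]
      refine ⟨this.1, ?_⟩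
      rw [this.2, hxk, hxk1, evalA a b _ hab]
      have hne : b - a ≠ 0 := sub_ne_zero.mpr hab.ne'
      field_simp
    · by_cases hk2 : k = i
      · have hxk : x k = b := by rw [hk2, hb]
        have hxk1 : x (k+1) = c := by rw [hk2, hc]
        have hptw : ∀ t ∈ Set.Ioo (x k) (x (k+1)),
            interpDeriv x n u t * biorthFn x n i t
              = ((u c - u b)/(c - b)) * ((2*(t-c)+(t-b))/(b-c)) := by
          intro t ht
          rw [hxk, hxk1] at ht
          have hbio : biorthFn x n i t = (2*(t-c)+(t-b))/(b-c) := by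
            rw [biorthFn, if_neg, if_pos ⟨hin, ht.1.le, ht.2⟩]
            rintro ⟨_, _, h3⟩
            exact absurd (ht.1.trans h3) (lt_irrefl b)
          have hid : interpDeriv x n u t = (u c - u b)/(c - b) := by
            rw [interpDeriv]
            rw [Finset.sum_eq_single_of_mem i (Finset.mem_range.mpr hin)]
            · rw [if_pos ⟨ht.1, ht.2⟩]
            · intro j hj hji
              rw [if_neg]
              rintro ⟨h1, h2⟩
              rcases Nat.lt_or_ge j i with hlt | hge
              · have : x (j+1) ≤ b := hle (j+1) i (by omega) (by omega)
                exact absurd (h2.trans_le this) (not_lt.mpr ht.1.le)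
              · have : c ≤ x j := hle (i+1) j (by omega) (Finset.mem_range.mp hj).le
                exact absurd (this.trans_lt h1) (not_lt.mpr ht.2.le)
          rw [hbio, hid]
        have := piece_eq hkk.le hptw (by apply Continuous.intervalIntegrable; fun_prop)
        rw [if_neg hk1, if_pos hk2]
        refine ⟨this.1, ?_⟩
        rw [this.2, hxk, hxk1, evalB b c _ hbc]
        have hne : c - b ≠ 0 := sub_ne_zero.mpr hbc.ne'
        field_simp
      · have hptw : ∀ t ∈ Set.Ioo (x k) (x (k+1)),
            interpDeriv x n u t * biorthFn x n i t = (0:ℝ) := by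
          intro t ht
          have hbio : biorthFn x n i t = 0 := by
            rw [biorthFn, if_neg, if_neg]
            · rintro ⟨_, h2, h3⟩
              rcases (by omega : k + 1 ≤ i ∨ i + 1 ≤ k) with hcase | hcase
              · have h4 : x (k+1) ≤ x i := hle (k+1) i hcase (by omega)
                exact absurd (h2.trans_lt (ht.2.trans_le h4)) (lt_irrefl _)
              · have h4 : x (i+1) ≤ x k := hle (i+1) k hcase (by omega)
                exact absurd (h3.trans_le (h4.trans ht.1.le)) (lt_irrefl _)
            · rintro ⟨_, h2, h3⟩
              rcases (by omega : k + 1 ≤ i - 1 ∨ i ≤ k) with hcase | hcase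
              · have h4 : x (k+1) ≤ x (i-1) := hle (k+1) (i-1) hcase (by omega)
                exact absurd (h2.trans_lt (ht.2.trans_le h4)) (lt_irrefl _)
              · have h4 : x i ≤ x k := hle i k hcase (by omega)
                exact absurd (h3.trans_le (h4.trans ht.1.le)) (lt_irrefl _)
          rw [hbio, mul_zero]
        have := piece_eq hkk.le hptw (intervalIntegrable_const)
        rw [if_neg hk1, if_neg hk2]
        exact ⟨this.1, by rw [this.2, intervalIntegral.integral_zero]⟩
  -- denominator pieces
  have denPiece : ∀ k < n,
      IntervalIntegrable (fun t => hatFn x n i t * biorthFn x n i t) volume (x k) (x (k+1)) ∧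
      (∫ t in (x k)..(x (k+1)), hatFn x n i t * biorthFn x n i t) =
        (if k = i-1 then (b - a)/2 else if k = i then (c - b)/2 else 0) := by
    intro k hk
    have hkk : x k < x (k+1) := hx k hk
    by_cases hk1 : k = i - 1
    · have hxk : x k = a := by rw [hk1, ha]
      have hxk1 : x (k+1) = b := by rw [hk1, hii, hb]
      have hptw : ∀ t ∈ Set.Ioo (x k) (x (k+1)),
          hatFn x n i t * biorthFn x n i t
            = ((t-a)/(b-a)) * ((2*(t-a)+(t-b))/(b-a)) := by
        intro t ht
        rw [hxk, hxk1] at ht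
        have hbio : biorthFn x n i t = (2*(t-a)+(t-b))/(b-a) := by
          rw [biorthFn, if_pos ⟨by omega, ht.1.le, ht.2⟩]
        have hhat : hatFn x n i t = (t-a)/(b-a) := by
          rw [hatFn, if_pos ⟨by omega, ht.1.le, ht.2.le⟩]
        rw [hbio, hhat]
      have := piece_eq hkk.le hptw (by apply Continuous.intervalIntegrable; fun_prop)
      rw [if_pos hk1]
      exact ⟨this.1, by rw [this.2, hxk, hxk1, evalC a b hab]⟩
    · by_cases hk2 : k = i
      · have hxk : x k = b := by rw [hk2, hb]
        have hxk1 : x (k+1) = c := by rw [hk2, hc]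
        have hptw : ∀ t ∈ Set.Ioo (x k) (x (k+1)),
            hatFn x n i t * biorthFn x n i t
              = ((c-t)/(c-b)) * ((2*(t-c)+(t-b))/(b-c)) := by
          intro t ht
          rw [hxk, hxk1] at ht
          have hbio : biorthFn x n i t = (2*(t-c)+(t-b))/(b-c) := by
            rw [biorthFn, if_neg, if_pos ⟨hin, ht.1.le, ht.2⟩]
            rintro ⟨_, _, h3⟩
            exact absurd (ht.1.trans h3) (lt_irrefl b)
          have hhat : hatFn x n i t = (c-t)/(c-b) := by
            rw [hatFn, if_neg, if_pos ⟨hin, ht.1.le, ht.2.le⟩]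
            rintro ⟨_, _, h3⟩
            exact absurd (ht.1.trans_le h3) (lt_irrefl b)
          rw [hbio, hhat]
        have := piece_eq hkk.le hptw (by apply Continuous.intervalIntegrable; fun_prop)
        rw [if_neg hk1, if_pos hk2]
        exact ⟨this.1, by rw [this.2, hxk, hxk1, evalD b c hbc]⟩
      · have hptw : ∀ t ∈ Set.Ioo (x k) (x (k+1)),
            hatFn x n i t * biorthFn x n i t = (0:ℝ) := by
          intro t ht
          have hbio : biorthFn x n i t = 0 := by
            rw [biorthFn, if_neg, if_neg]
            · rintro ⟨_, h2, h3⟩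
              rcases (by omega : k + 1 ≤ i ∨ i + 1 ≤ k) with hcase | hcase
              · have h4 : x (k+1) ≤ x i := hle (k+1) i hcase (by omega)
                exact absurd (h2.trans_lt (ht.2.trans_le h4)) (lt_irrefl _)
              · have h4 : x (i+1) ≤ x k := hle (i+1) k hcase (by omega)
                exact absurd (h3.trans_le (h4.trans ht.1.le)) (lt_irrefl _)
            · rintro ⟨_, h2, h3⟩
              rcases (by omega : k + 1 ≤ i - 1 ∨ i ≤ k) with hcase | hcase
              · have h4 : x (k+1) ≤ x (i-1) := hle (k+1) (i-1) hcase (by omega)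
                exact absurd (h2.trans_lt (ht.2.trans_le h4)) (lt_irrefl _)
              · have h4 : x i ≤ x k := hle i k hcase (by omega)
                exact absurd (h3.trans_le (h4.trans ht.1.le)) (lt_irrefl _)
          rw [hbio, mul_zero]
        have := piece_eq hkk.le hptw (intervalIntegrable_const)
        rw [if_neg hk1, if_neg hk2]
        exact ⟨this.1, by rw [this.2, intervalIntegral.integral_zero]⟩
  -- assemble
  have hsum : ∀ (A B : ℝ),
      ∑ k ∈ Finset.range n, (if k = i-1 then A else if k = i then B else 0) = A + B := by
    intro A B
    have : ∀ k, (if k = i-1 then A else if k = i then B else 0)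
        = (if k = i-1 then A else 0) + (if k = i then B else 0) := by
      intro k
      by_cases h1 : k = i - 1
      · rw [if_pos h1, if_pos h1, if_neg (by omega), add_zero]
      · rw [if_neg h1, if_neg h1, zero_add]
    simp only [this, Finset.sum_add_distrib]
    rw [Finset.sum_ite_eq' (Finset.range n) (i-1) (fun _ => A),
        Finset.sum_ite_eq' (Finset.range n) i (fun _ => B),
        if_pos (Finset.mem_range.mpr (by omega)), if_pos (Finset.mem_range.mpr hin)]
  have hnum : (∫ t in (x 0)..(x n), interpDeriv x n u t * biorthFn x n i t)
      = (u b - u a)/2 + (u c - u b)/2 := by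
    rw [← intervalIntegral.sum_integral_adjacent_intervals (fun k hk => (numPiece k hk).1)]
    rw [Finset.sum_congr rfl (fun k hk => (numPiece k (Finset.mem_range.mp hk)).2)]
    exact hsum _ _
  have hden : (∫ t in (x 0)..(x n), hatFn x n i t * biorthFn x n i t)
      = (b - a)/2 + (c - b)/2 := by
    rw [← intervalIntegral.sum_integral_adjacent_intervals (fun k hk => (denPiece k hk).1)]
    rw [Finset.sum_congr rfl (fun k hk => (denPiece k (Finset.mem_range.mp hk)).2)]
    exact hsum _ _
  rw [recGrad, hnum, hden]
  have hca : c - a ≠ 0 := sub_ne_zero.mpr hac.ne'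
  rw [show (b - a)/2 + (c - b)/2 = (c - a)/2 by ring,
      show (u b - u a)/2 + (u c - u b)/2 = (u c - u a)/2 by ring]
  rw [div_div_div_eq]
  field_simp
end

section
/- (Remark, uniform grid) Suppose the partition is uniform, i.e. x_i − x_{i−1} = h for all 1 ≤ i ≤ n and some h > 0. Let u(x) = a x² + b x + c with a, b, c ∈ ℝ. Then for every interior index 1 ≤ i ≤ n−1, the recovered gradient value satisfies g_i = u'(x_i), i.e. the gradient of any quadratic function is recovered exactly at all interior grid points. -/
open intervalIntegral MeasureTheory Set

private lemma ae_ne_pt (c : ℝ) : ∀ᵐ t : ℝ, t ≠ c := by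
  have : MeasureTheory.volume ({c} : Set ℝ) = 0 := Real.volume_singleton
  simpa [MeasureTheory.ae_iff] using this

private lemma integral_congr_Ioo {f g : ℝ → ℝ} {p q : ℝ} (hpq : p ≤ q)
    (hfg : ∀ t ∈ Set.Ioo p q, f t = g t) :
    ∫ t in p..q, f t = ∫ t in p..q, g t := by
  apply intervalIntegral.integral_congr_ae
  filter_upwards [ae_ne_pt q] with t ht htmem
  rw [Set.uIoc_of_le hpq] at htmem
  exact hfg t ⟨htmem.1, lt_of_le_of_ne htmem.2 ht⟩

private lemma intervalIntegrable_of_eq_Ioo {f g : ℝ → ℝ} {p q : ℝ} (hpq : p ≤ q)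
    (hfg : ∀ t ∈ Set.Ioo p q, f t = g t) (hg : Continuous g) :
    IntervalIntegrable f MeasureTheory.volume p q := by
  rw [intervalIntegrable_iff_integrableOn_Ioc_of_le hpq]
  have hgi : IntegrableOn g (Set.Ioc p q) := by
    have := hg.intervalIntegrable (μ := MeasureTheory.volume) p q
    rwa [intervalIntegrable_iff_integrableOn_Ioc_of_le hpq] at this
  apply hgi.congr_fun_ae
  filter_upwards [MeasureTheory.ae_restrict_mem measurableSet_Ioc,
    MeasureTheory.ae_restrict_of_ae (ae_ne_pt q)] with t hmem hne
  exact (hfg t ⟨hmem.1, lt_of_le_of_ne hmem.2 hne⟩).symm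

private lemma integral_quad (A B C p q : ℝ) :
    ∫ t in p..q, (A*t^2 + B*t + C) =
      A*(q^3-p^3)/3 + B*(q^2-p^2)/2 + C*(q-p) := by
  have hd : ∀ t : ℝ, HasDerivAt (fun t => A*t^3/3 + B*t^2/2 + C*t)
      (A*t^2 + B*t + C) t := by
    intro t
    have h1 : HasDerivAt (fun t : ℝ => t^3) (3*t^2) t := by
      simpa using hasDerivAt_pow 3 t
    have h2 : HasDerivAt (fun t : ℝ => t^2) (2*t) t := by
      simpa using hasDerivAt_pow 2 t
    have h3 := ((h1.const_mul (A/3)).add (h2.const_mul (B/2))).add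
      ((hasDerivAt_id t).const_mul C)
    have e : (fun t : ℝ => A*t^3/3 + B*t^2/2 + C*t)
        = fun t : ℝ => (A/3*t^3 + B/2*t^2) + C*t := by funext s; ring
    rw [e]
    exact h3.congr_deriv (by ring)
  rw [intervalIntegral.integral_eq_sub_of_hasDerivAt (fun t _ => hd t)
    ((Continuous.intervalIntegrable (by continuity) p q))]
  ring


/-- uniform grid: if the partition is uniform with stepsize `h > 0`, then
for `u(x) = a x² + b x + c` and every interior index `1 ≤ i ≤ n-1`, `g_i = u'(x_i)`
(with `u'(t) = 2 a t + b`). -/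
theorem recGrad_quadratic_exact_uniform (n : ℕ) (x : ℕ → ℝ) (hn : 2 ≤ n)
    (hx : ∀ i < n, x i < x (i+1)) (h : ℝ) (hpos : 0 < h)
    (hunif : ∀ i : ℕ, 1 ≤ i → i ≤ n → x i - x (i-1) = h) (a b c : ℝ) :
    ∀ i : ℕ, 1 ≤ i → i < n →
      recGrad x n (fun t => a * t^2 + b * t + c) i = 2 * a * x i + b := by
  intro i hi1 hin
  have hmono : ∀ k : ℕ, k ≤ n → ∀ j : ℕ, j ≤ k → x j ≤ x k := by
    intro k
    induction k with
    | zero =>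
      intro _ j hj
      obtain rfl : j = 0 := Nat.le_zero.mp hj
      exact le_rfl
    | succ k ih =>
      intro hk j hj
      rcases Nat.eq_or_lt_of_le hj with heq | hlt
      · simp [heq]
      · exact (ih (by omega) j (by omega)).trans (hx k (by omega)).le
  -- evaluation of interpDeriv on open subintervals
  have hder : ∀ j, j < n → ∀ t, x j < t → t < x (j+1) →
      interpDeriv x n (fun s => a * s^2 + b * s + c) t =
        ((a * (x (j+1))^2 + b * (x (j+1)) + c) - (a * (x j)^2 + b * (x j) + c))
          / (x (j+1) - x j) := by
    intro j hj t ht1 ht2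
    unfold interpDeriv
    rw [Finset.sum_eq_single j]
    · rw [if_pos ⟨ht1, ht2⟩]
    · intro k hk hkj
      rw [if_neg]
      rintro ⟨hk1, hk2⟩
      rcases lt_or_gt_of_ne hkj with hlt | hgt
      · have : x (k+1) ≤ x j := hmono j (by omega) (k+1) (by omega)
        linarith
      · have : x (j+1) ≤ x k := hmono k (le_of_lt (Finset.mem_range.mp hk)) (j+1) (by omega)
        linarith
    · intro hj'; exact absurd (Finset.mem_range.mpr hj) hj'
  -- evaluation of biorthFn on open subintervals
  have hbior : ∀ j, j < n → ∀ t, x j < t → t < x (j+1) →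
      biorthFn x n i t =
        if j + 1 = i then (2*(t - x j) + (t - x (j+1))) / (x (j+1) - x j)
        else if j = i then (2*(t - x (j+1)) + (t - x j)) / (x j - x (j+1))
        else 0 := by
    intro j hj t ht1 ht2
    unfold biorthFn
    by_cases hji : j + 1 = i
    · have e1 : i - 1 = j := by omega
      rw [if_pos hji, if_pos ⟨by omega, by rw [e1]; exact ht1.le, by rw [← hji]; exact ht2⟩]
      rw [e1, ← hji]
    · rw [if_neg hji]
      by_cases hji2 : j = i
      · subst hji2
        rw [if_pos rfl, if_neg, if_pos ⟨hj, ht1.le, ht2⟩]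
        rintro ⟨-, -, hti⟩
        exact absurd hti (not_lt.mpr ht1.le)
      · rw [if_neg hji2, if_neg, if_neg]
        · rintro ⟨hi', hit, hti⟩
          rcases lt_or_gt_of_ne hji2 with hlt | hgt
          · have : x (j+1) ≤ x i := hmono i (by omega) (j+1) (by omega)
            linarith
          · have : x (i+1) ≤ x j := hmono j (by omega) (i+1) (by omega)
            linarith
        · rintro ⟨-, hit, hti⟩
          rcases lt_or_gt_of_ne hji2 with hlt | hgt
          · have : x (j+1) ≤ x (i-1) := hmono (i-1) (by omega) (j+1) (by omega)
            linarith
          · have : x i ≤ x j := hmono j (by omega) i (by omega)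
            linarith
  -- evaluation of hatFn on open subintervals
  have hhat : ∀ j, j < n → ∀ t, x j < t → t < x (j+1) →
      hatFn x n i t =
        if j + 1 = i then (t - x j) / (x (j+1) - x j)
        else if j = i then (x (j+1) - t) / (x (j+1) - x j)
        else 0 := by
    intro j hj t ht1 ht2
    unfold hatFn
    by_cases hji : j + 1 = i
    · have e1 : i - 1 = j := by omega
      rw [if_pos hji, if_pos ⟨by omega, by rw [e1]; exact ht1.le, by rw [← hji]; exact ht2.le⟩]
      rw [e1, ← hji]
    · rw [if_neg hji]
      by_cases hji2 : j = i
      · subst hji2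
        rw [if_pos rfl, if_neg, if_pos ⟨hj, ht1.le, ht2.le⟩]
        rintro ⟨-, -, hti⟩
        exact absurd (lt_of_lt_of_le ht1 hti) (lt_irrefl _)
      · rw [if_neg hji2, if_neg, if_neg]
        · rintro ⟨hi', hit, hti⟩
          rcases lt_or_gt_of_ne hji2 with hlt | hgt
          · have : x (j+1) ≤ x i := hmono i (by omega) (j+1) (by omega)
            linarith
          · have : x (i+1) ≤ x j := hmono j (by omega) (i+1) (by omega)
            linarith
        · rintro ⟨-, hit, hti⟩
          rcases lt_or_gt_of_ne hji2 with hlt | hgt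
          · have : x (j+1) ≤ x (i-1) := hmono (i-1) (by omega) (j+1) (by omega)
            linarith
          · have : x i ≤ x j := hmono j (by omega) i (by omega)
            linarith
  have hq_p : x i - x (i-1) = h := hunif i hi1 hin.le
  have hr_q : x (i+1) - x i = h := by
    have := hunif (i+1) (by omega) (by omega)
    simpa using this
  have hp : x (i-1) = x i - h := by linarith
  have hr : x (i+1) = x i + h := by linarith
  have hne : h ≠ 0 := ne_of_gt hpos
  have hq_r : x i - x (i+1) = -h := by linarith
  -- numerator, per subinterval
  have hNj : ∀ j, j < n →
      (∫ t in x j..x (j+1),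
        interpDeriv x n (fun s => a*s^2+b*s+c) t * biorthFn x n i t)
      = (if j = i - 1 then (a*(x (i-1) + x i) + b)*h/2 else 0)
        + (if j = i then (a*(x i + x (i+1)) + b)*h/2 else 0) := by
    intro j hj
    have hle : x j ≤ x (j+1) := (hx j hj).le
    by_cases hji : j + 1 = i
    · have e0 : j = i - 1 := by omega
      rw [if_pos e0, if_neg (by omega), add_zero]
      have e1 : x (j+1) = x i := by rw [hji]
      have e2 : x j = x (i-1) := by rw [e0]
      have hpt : ∀ t ∈ Set.Ioo (x j) (x (j+1)),
          interpDeriv x n (fun s => a*s^2+b*s+c) t * biorthFn x n i t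
          = 0*t^2 + (3*(a*(x (i-1) + x i) + b)/h)*t
              + ((a*(x (i-1) + x i) + b)*(-2*(x (i-1)) - x i)/h) := by
        intro t ht
        rw [hder j hj t ht.1 ht.2, hbior j hj t ht.1 ht.2, if_pos hji]
        rw [e1, e2, hq_p, hp]
        field_simp
        ring
      rw [integral_congr_Ioo hle hpt, integral_quad]
      rw [e1, e2, hp]
      field_simp
      ring
    · by_cases hji2 : j = i
      · rw [if_neg (by omega), if_pos hji2, zero_add]
        have e1 : x (j+1) = x (i+1) := by rw [hji2]
        have e2 : x j = x i := by rw [hji2]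
        have hpt : ∀ t ∈ Set.Ioo (x j) (x (j+1)),
            interpDeriv x n (fun s => a*s^2+b*s+c) t * biorthFn x n i t
            = 0*t^2 + (-3*(a*(x i + x (i+1)) + b)/h)*t
                + ((a*(x i + x (i+1)) + b)*(2*(x (i+1)) + x i)/h) := by
          intro t ht
          rw [hder j hj t ht.1 ht.2, hbior j hj t ht.1 ht.2, if_neg hji, if_pos hji2]
          rw [e1, e2, hr_q, hq_r, hr]
          field_simp
          ring
        rw [integral_congr_Ioo hle hpt, integral_quad]
        rw [e1, e2, hr]
        field_simp
        ring
      · rw [if_neg (by omega), if_neg hji2, add_zero]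
        have hpt : ∀ t ∈ Set.Ioo (x j) (x (j+1)),
            interpDeriv x n (fun s => a*s^2+b*s+c) t * biorthFn x n i t
            = (0:ℝ) := by
          intro t ht
          rw [hbior j hj t ht.1 ht.2, if_neg hji, if_neg hji2, mul_zero]
        rw [integral_congr_Ioo hle hpt, intervalIntegral.integral_zero]
  -- denominator, per subinterval
  have hDj : ∀ j, j < n →
      (∫ t in x j..x (j+1), hatFn x n i t * biorthFn x n i t)
      = (if j = i - 1 then h/2 else 0) + (if j = i then h/2 else 0) := by
    intro j hj
    have hle : x j ≤ x (j+1) := (hx j hj).le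
    by_cases hji : j + 1 = i
    · have e0 : j = i - 1 := by omega
      rw [if_pos e0, if_neg (by omega), add_zero]
      have e1 : x (j+1) = x i := by rw [hji]
      have e2 : x j = x (i-1) := by rw [e0]
      have hpt : ∀ t ∈ Set.Ioo (x j) (x (j+1)),
          hatFn x n i t * biorthFn x n i t
          = (3/(h*h))*t^2 + (-(5*(x (i-1)) + x i)/(h*h))*t
              + ((2*(x (i-1))^2 + x (i-1) * x i)/(h*h)) := by
        intro t ht
        rw [hhat j hj t ht.1 ht.2, hbior j hj t ht.1 ht.2, if_pos hji, if_pos hji]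
        rw [e1, e2, hq_p]
        field_simp
        ring
      rw [integral_congr_Ioo hle hpt, integral_quad]
      rw [e1, e2, hp]
      field_simp
      ring
    · by_cases hji2 : j = i
      · rw [if_neg (by omega), if_pos hji2, zero_add]
        have e1 : x (j+1) = x (i+1) := by rw [hji2]
        have e2 : x j = x i := by rw [hji2]
        have hpt : ∀ t ∈ Set.Ioo (x j) (x (j+1)),
            hatFn x n i t * biorthFn x n i t
            = (3/(h*h))*t^2 + (-(5*(x (i+1)) + x i)/(h*h))*t
                + ((2*(x (i+1))^2 + x (i+1) * x i)/(h*h)) := by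
          intro t ht
          rw [hhat j hj t ht.1 ht.2, hbior j hj t ht.1 ht.2, if_neg hji, if_neg hji,
            if_pos hji2, if_pos hji2]
          rw [e1, e2, hr_q, hq_r]
          field_simp
          ring
        rw [integral_congr_Ioo hle hpt, integral_quad]
        rw [e1, e2, hr]
        field_simp
        ring
      · rw [if_neg (by omega), if_neg hji2, add_zero]
        have hpt : ∀ t ∈ Set.Ioo (x j) (x (j+1)),
            hatFn x n i t * biorthFn x n i t = (0:ℝ) := by
          intro t ht
          rw [hbior j hj t ht.1 ht.2, if_neg hji, if_neg hji2, mul_zero]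
        rw [integral_congr_Ioo hle hpt, intervalIntegral.integral_zero]
  -- integrability
  have hNint : ∀ k, k < n → IntervalIntegrable
      (fun t => interpDeriv x n (fun s => a*s^2+b*s+c) t * biorthFn x n i t)
      MeasureTheory.volume (x k) (x (k+1)) := by
    intro k hk
    apply intervalIntegrable_of_eq_Ioo (hx k hk).le (g := fun t =>
      (((a*(x (k+1))^2 + b*(x (k+1)) + c) - (a*(x k)^2 + b*(x k) + c)) / (x (k+1) - x k)) *
      (if k + 1 = i then (2*(t - x k) + (t - x (k+1))) / (x (k+1) - x k)
       else if k = i then (2*(t - x (k+1)) + (t - x k)) / (x k - x (k+1))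
       else 0))
    · intro t ht
      rw [hder k hk t ht.1 ht.2, hbior k hk t ht.1 ht.2]
    · apply continuous_const.mul
      by_cases h1 : k + 1 = i
      · simp only [if_pos h1]; fun_prop
      · simp only [if_neg h1]
        by_cases h2 : k = i
        · simp only [if_pos h2]; fun_prop
        · simp only [if_neg h2]; fun_prop
  have hDint : ∀ k, k < n → IntervalIntegrable
      (fun t => hatFn x n i t * biorthFn x n i t)
      MeasureTheory.volume (x k) (x (k+1)) := by
    intro k hk
    apply intervalIntegrable_of_eq_Ioo (hx k hk).le (g := fun t =>
      (if k + 1 = i then (t - x k) / (x (k+1) - x k)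
       else if k = i then (x (k+1) - t) / (x (k+1) - x k)
       else 0) *
      (if k + 1 = i then (2*(t - x k) + (t - x (k+1))) / (x (k+1) - x k)
       else if k = i then (2*(t - x (k+1)) + (t - x k)) / (x k - x (k+1))
       else 0))
    · intro t ht
      rw [hhat k hk t ht.1 ht.2, hbior k hk t ht.1 ht.2]
    · apply Continuous.mul
      · by_cases h1 : k + 1 = i
        · simp only [if_pos h1]; fun_prop
        · simp only [if_neg h1]
          by_cases h2 : k = i
          · simp only [if_pos h2]; fun_prop
          · simp only [if_neg h2]; fun_prop
      · by_cases h1 : k + 1 = i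
        · simp only [if_pos h1]; fun_prop
        · simp only [if_neg h1]
          by_cases h2 : k = i
          · simp only [if_pos h2]; fun_prop
          · simp only [if_neg h2]; fun_prop
  -- total numerator and denominator
  have hNum : (∫ t in (x 0)..(x n),
      interpDeriv x n (fun s => a*s^2+b*s+c) t * biorthFn x n i t)
      = (a*(x (i-1) + x i) + b)*h/2 + (a*(x i + x (i+1)) + b)*h/2 := by
    rw [← intervalIntegral.sum_integral_adjacent_intervals hNint]
    rw [Finset.sum_congr rfl (fun j hj => hNj j (Finset.mem_range.mp hj))]
    rw [Finset.sum_add_distrib, Finset.sum_ite_eq', Finset.sum_ite_eq']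
    rw [if_pos (Finset.mem_range.mpr (by omega : i - 1 < n)),
      if_pos (Finset.mem_range.mpr hin)]
  have hDen : (∫ t in (x 0)..(x n), hatFn x n i t * biorthFn x n i t)
      = h/2 + h/2 := by
    rw [← intervalIntegral.sum_integral_adjacent_intervals hDint]
    rw [Finset.sum_congr rfl (fun j hj => hDj j (Finset.mem_range.mp hj))]
    rw [Finset.sum_add_distrib, Finset.sum_ite_eq', Finset.sum_ite_eq']
    rw [if_pos (Finset.mem_range.mpr (by omega : i - 1 < n)),
      if_pos (Finset.mem_range.mpr hin)]
  unfold recGrad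
  rw [hNum, hDen, hp, hr]
  field_simp
  ring
end

section
/- (Corollary, nodal error for quadratics on a general grid) Let u(x) = a x² + b x + c with a, b, c ∈ ℝ. Then for every interior index 1 ≤ i ≤ n−1, g_i − u'(x_i) = a (x_{i−1} + x_{i+1} − 2 x_i); moreover g_0 − u'(x_0) = a (x_1 − x_0) and g_n − u'(x_n) = a (x_{n−1} − x_n). -/
open intervalIntegral
open MeasureTheory Set

open intervalIntegral
open MeasureTheory Set

lemma ae_imp_Ioc {f g : ℝ → ℝ} {A B : ℝ} (h : ∀ t ∈ Set.Ioo A B, f t = g t) :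
    ∀ᵐ t : ℝ, t ∈ Set.Ioc A B → f t = g t := by
  have hB : ∀ᵐ t : ℝ, t ∉ ({B} : Set ℝ) := by
    rw [← measure_eq_zero_iff_ae_notMem]; exact measure_singleton B
  filter_upwards [hB] with t htB ht
  exact h t ⟨ht.1, lt_of_le_of_ne ht.2 (by simpa using htB)⟩

lemma intEq {f g : ℝ → ℝ} {A B : ℝ} (hAB : A ≤ B) (h : ∀ t ∈ Set.Ioo A B, f t = g t) :
    ∫ t in A..B, f t = ∫ t in A..B, g t := by
  apply intervalIntegral.integral_congr_ae
  rw [uIoc_of_le hAB]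
  exact ae_imp_Ioc h

lemma intII {f g : ℝ → ℝ} {A B : ℝ} (hAB : A ≤ B) (hg : Continuous g)
    (h : ∀ t ∈ Set.Ioo A B, f t = g t) : IntervalIntegrable f volume A B := by
  rw [intervalIntegrable_iff_integrableOn_Ioc_of_le hAB]
  have hgi : IntegrableOn g (Set.Ioc A B) := (hg.intervalIntegrable A B).1
  exact hgi.congr ((ae_restrict_iff' measurableSet_Ioc).mpr
    (ae_imp_Ioc fun t ht => (h t ht).symm))

lemma intPoly (p q r A B : ℝ) :
    ∫ t in A..B, (p*t^2 + q*t + r) = p*(B^3-A^3)/3 + q*(B^2-A^2)/2 + r*(B-A) := by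
  have h1 : IntervalIntegrable (fun t : ℝ => p*t^2) volume A B := by
    apply Continuous.intervalIntegrable; continuity
  have h2 : IntervalIntegrable (fun t : ℝ => q*t) volume A B := by
    apply Continuous.intervalIntegrable; continuity
  have h3 : IntervalIntegrable (fun t : ℝ => r) volume A B := by
    apply Continuous.intervalIntegrable; continuity
  rw [intervalIntegral.integral_add (h1.add h2) h3, intervalIntegral.integral_add h1 h2,
    intervalIntegral.integral_const_mul, intervalIntegral.integral_const_mul,
    integral_pow, integral_id, intervalIntegral.integral_const]
  simp only [smul_eq_mul]
  push_cast
  ring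

lemma pieceA (s A B : ℝ) (h : A < B) :
    ∫ t in A..B, s * ((2*(t-A)+(t-B))/(B-A)) = s*(B-A)/2 := by
  have hne : B - A ≠ 0 := sub_ne_zero.mpr h.ne'
  have e : (fun t : ℝ => s * ((2*(t-A)+(t-B))/(B-A)))
      = fun t : ℝ => (0:ℝ)*t^2 + (3*s/(B-A))*t + (s*(-2*A-B)/(B-A)) := by
    funext t; field_simp; ring
  rw [e, intPoly]
  field_simp
  ring

lemma pieceB (s B C : ℝ) (h : B < C) :
    ∫ t in B..C, s * ((2*(t-C)+(t-B))/(B-C)) = s*(C-B)/2 := by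
  have hne : B - C ≠ 0 := sub_ne_zero.mpr h.ne
  have e : (fun t : ℝ => s * ((2*(t-C)+(t-B))/(B-C)))
      = fun t : ℝ => (0:ℝ)*t^2 + (3*s/(B-C))*t + (s*(-2*C-B)/(B-C)) := by
    funext t; field_simp; ring
  rw [e, intPoly]
  field_simp
  ring

lemma pieceC (A B : ℝ) (h : A < B) :
    ∫ t in A..B, ((t-A)/(B-A)) * ((2*(t-A)+(t-B))/(B-A)) = (B-A)/2 := by
  have hne : B - A ≠ 0 := sub_ne_zero.mpr h.ne'
  have e : (fun t : ℝ => ((t-A)/(B-A)) * ((2*(t-A)+(t-B))/(B-A)))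
      = fun t : ℝ => (3/((B-A)*(B-A)))*t^2 + (-(5*A+B)/((B-A)*(B-A)))*t
          + (A*(2*A+B)/((B-A)*(B-A))) := by
    funext t; field_simp; ring
  rw [e, intPoly]
  field_simp
  ring

lemma pieceD (B C : ℝ) (h : B < C) :
    ∫ t in B..C, ((C-t)/(C-B)) * ((2*(t-C)+(t-B))/(B-C)) = (C-B)/2 := by
  have hne : C - B ≠ 0 := sub_ne_zero.mpr h.ne'
  have hne' : B - C ≠ 0 := sub_ne_zero.mpr h.ne
  have e : (fun t : ℝ => ((C-t)/(C-B)) * ((2*(t-C)+(t-B))/(B-C)))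
      = fun t : ℝ => (3/((C-B)*(C-B)))*t^2 + (-(5*C+B)/((C-B)*(C-B)))*t
          + (C*(2*C+B)/((C-B)*(C-B))) := by
    funext t; field_simp; ring
  rw [e, intPoly]
  field_simp
  ring

lemma xlt (n : ℕ) (x : ℕ → ℝ) (hx : ∀ i < n, x i < x (i+1)) :
    ∀ j k, j < k → k ≤ n → x j < x k := by
  intro j k
  induction k with
  | zero => intro h _; omega
  | succ m ih =>
    intro hj hk
    rcases Nat.lt_succ_iff_lt_or_eq.mp hj with h | h
    · exact (ih h (by omega)).trans (hx m (by omega))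
    · subst h; exact hx j (by omega)

/-- nodal error for quadratics on a general grid: for
`u(x) = a x² + b x + c` (so `u'(t) = 2 a t + b`), for every interior index `1 ≤ i ≤ n-1`
`g_i - u'(x_i) = a (x_{i-1} + x_{i+1} - 2 x_i)`, and
`g_0 - u'(x_0) = a (x_1 - x_0)`, `g_n - u'(x_n) = a (x_{n-1} - x_n)`. -/
theorem recGrad_quadratic_nodal_error (n : ℕ) (x : ℕ → ℝ) (hn : 2 ≤ n)
    (hx : ∀ i < n, x i < x (i+1)) (a b c : ℝ) :
    (∀ i : ℕ, 1 ≤ i → i < n →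
      recGrad x n (fun t => a * t^2 + b * t + c) i - (2 * a * x i + b)
        = a * (x (i-1) + x (i+1) - 2 * x i)) ∧
    recGrad x n (fun t => a * t^2 + b * t + c) 0 - (2 * a * x 0 + b) = a * (x 1 - x 0) ∧
    recGrad x n (fun t => a * t^2 + b * t + c) n - (2 * a * x n + b)
      = a * (x (n-1) - x n) := by
  have hAne : ∀ j k : ℕ, j < k → k ≤ n → x j < x k := xlt n x hx
  set u : ℝ → ℝ := fun t => a*t^2 + b*t + c with hu
  have hinterp : ∀ j, j < n → ∀ t ∈ Set.Ioo (x j) (x (j+1)),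
      interpDeriv x n u t = (u (x (j+1)) - u (x j)) / (x (j+1) - x j) := by
    intro j hj t ht
    unfold interpDeriv
    rw [Finset.sum_eq_single j]
    · rw [if_pos ⟨ht.1, ht.2⟩]
    · intro m hm hmj
      rw [if_neg]
      rintro ⟨hm1, hm2⟩
      have hmn : m < n := Finset.mem_range.mp hm
      rcases lt_or_gt_of_ne hmj with h | h
      · have hle : x (m+1) ≤ x j := by
          rcases Nat.lt_or_ge (m+1) j with e | e
          · exact (hAne (m+1) j e (by omega)).le
          · have hje : m + 1 = j := by omega
            rw [hje]
        have := ht.1; linarith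
      · have hle : x (j+1) ≤ x m := by
          rcases Nat.lt_or_ge (j+1) m with e | e
          · exact (hAne (j+1) m e (by omega)).le
          · have hje : j + 1 = m := by omega
            rw [hje]
        have := ht.2; linarith
    · intro hj'; exact absurd (Finset.mem_range.mpr hj) hj'
  refine ⟨?_, ?_, ?_⟩
  · -- interior case
    intro i h1 h2
    have hii : i - 1 + 1 = i := by omega
    have hAB : x (i-1) < x i := by
      have := hx (i-1) (by omega); rwa [hii] at this
    have hBC : x i < x (i+1) := hx i h2
    have h0A : x 0 ≤ x (i-1) := by
      rcases Nat.eq_zero_or_pos (i-1) with h | h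
      · rw [h]
      · exact (hAne 0 (i-1) h (by omega)).le
    have hCn : x (i+1) ≤ x n := by
      rcases Nat.lt_or_ge (i+1) n with h | h
      · exact (hAne (i+1) n h le_rfl).le
      · have : i + 1 = n := by omega
        rw [this]
    set A := x (i-1) with hA
    set B := x i with hB
    set C := x (i+1) with hC
    set s1 : ℝ := (u B - u A) / (B - A) with hs1
    set s2 : ℝ := (u C - u B) / (C - B) with hs2
    -- biorth zero on outer regions
    have hbz1 : ∀ t ∈ Set.Ioo (x 0) A, biorthFn x n i t = 0 := by
      intro t ht
      have c1 : ¬(0 < i ∧ x (i-1) ≤ t ∧ t < x i) := by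
        rintro ⟨_, hle, _⟩; rw [← hA] at hle; linarith [ht.2]
      have c2 : ¬(i < n ∧ x i ≤ t ∧ t < x (i+1)) := by
        rintro ⟨_, hle, _⟩; rw [← hB] at hle; linarith [ht.2, hAB]
      simp only [biorthFn, if_neg c1, if_neg c2]
    have hbz2 : ∀ t ∈ Set.Ioo C (x n), biorthFn x n i t = 0 := by
      intro t ht
      have c1 : ¬(0 < i ∧ x (i-1) ≤ t ∧ t < x i) := by
        rintro ⟨_, _, hlt⟩; rw [← hB] at hlt; linarith [ht.1, hBC]
      have c2 : ¬(i < n ∧ x i ≤ t ∧ t < x (i+1)) := by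
        rintro ⟨_, _, hlt⟩; rw [← hC] at hlt; linarith [ht.1]
      simp only [biorthFn, if_neg c1, if_neg c2]
    have hbm1 : ∀ t ∈ Set.Ioo A B, biorthFn x n i t = (2*(t-A)+(t-B))/(B-A) := by
      intro t ht
      have c1 : 0 < i ∧ x (i-1) ≤ t ∧ t < x i := ⟨by omega, by rw [← hA]; exact ht.1.le, by rw [← hB]; exact ht.2⟩
      simp only [biorthFn, if_pos c1, ← hA, ← hB]
      rw [if_pos (show 0 < i ∧ A ≤ t ∧ t < B from c1)]
    have hbm2 : ∀ t ∈ Set.Ioo B C, biorthFn x n i t = (2*(t-C)+(t-B))/(B-C) := by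
      intro t ht
      have c1 : ¬(0 < i ∧ x (i-1) ≤ t ∧ t < x i) := by
        rintro ⟨_, _, hlt⟩; rw [← hB] at hlt; linarith [ht.1]
      have c2 : i < n ∧ x i ≤ t ∧ t < x (i+1) := ⟨h2, by rw [← hB]; exact ht.1.le, by rw [← hC]; exact ht.2⟩
      simp only [biorthFn, if_neg c1, if_pos c2, ← hB, ← hC]
      rw [if_neg (show ¬(0 < i ∧ x (i-1) ≤ t ∧ t < B) from c1), if_pos (show i < n ∧ B ≤ t ∧ t < C from c2)]
    -- numerator
    have z1 : ∀ t ∈ Set.Ioo (x 0) A, interpDeriv x n u t * biorthFn x n i t = 0 := by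
      intro t ht; rw [hbz1 t ht, mul_zero]
    have z2 : ∀ t ∈ Set.Ioo C (x n), interpDeriv x n u t * biorthFn x n i t = 0 := by
      intro t ht; rw [hbz2 t ht, mul_zero]
    have m1 : ∀ t ∈ Set.Ioo A B, interpDeriv x n u t * biorthFn x n i t
        = s1 * ((2*(t-A)+(t-B))/(B-A)) := by
      intro t ht
      have hI := hinterp (i-1) (by omega) t (by rw [hii]; exact ht)
      rw [hii] at hI
      rw [hI, hbm1 t ht, hs1, ← hA, ← hB]
    have m2 : ∀ t ∈ Set.Ioo B C, interpDeriv x n u t * biorthFn x n i t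
        = s2 * ((2*(t-C)+(t-B))/(B-C)) := by
      intro t ht
      rw [hinterp i h2 t ht, hbm2 t ht, hs2, ← hB, ← hC]
    have I1 : IntervalIntegrable (fun t => interpDeriv x n u t * biorthFn x n i t) MeasureTheory.volume (x 0) A :=
      intII h0A continuous_const z1
    have I2 : IntervalIntegrable (fun t => interpDeriv x n u t * biorthFn x n i t) MeasureTheory.volume A B :=
      intII hAB.le (by fun_prop) m1
    have I3 : IntervalIntegrable (fun t => interpDeriv x n u t * biorthFn x n i t) MeasureTheory.volume B C :=
      intII hBC.le (by fun_prop) m2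
    have I4 : IntervalIntegrable (fun t => interpDeriv x n u t * biorthFn x n i t) MeasureTheory.volume C (x n) :=
      intII hCn continuous_const z2
    have hN : (∫ t in (x 0)..(x n), interpDeriv x n u t * biorthFn x n i t)
        = s1*(B-A)/2 + s2*(C-B)/2 := by
      rw [← intervalIntegral.integral_add_adjacent_intervals I1 ((I2.trans I3).trans I4),
          ← intervalIntegral.integral_add_adjacent_intervals I2 (I3.trans I4),
          ← intervalIntegral.integral_add_adjacent_intervals I3 I4,
          intEq h0A z1, intEq hAB.le m1, intEq hBC.le m2, intEq hCn z2,
          pieceA s1 A B hAB, pieceB s2 B C hBC]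
      simp
    -- denominator
    have z1d : ∀ t ∈ Set.Ioo (x 0) A, hatFn x n i t * biorthFn x n i t = 0 := by
      intro t ht; rw [hbz1 t ht, mul_zero]
    have z2d : ∀ t ∈ Set.Ioo C (x n), hatFn x n i t * biorthFn x n i t = 0 := by
      intro t ht; rw [hbz2 t ht, mul_zero]
    have m1d : ∀ t ∈ Set.Ioo A B, hatFn x n i t * biorthFn x n i t
        = ((t-A)/(B-A)) * ((2*(t-A)+(t-B))/(B-A)) := by
      intro t ht
      have c1 : 0 < i ∧ x (i-1) ≤ t ∧ t ≤ x i := ⟨by omega, by rw [← hA]; exact ht.1.le, by rw [← hB]; exact ht.2.le⟩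
      rw [hbm1 t ht]
      simp only [hatFn, if_pos c1, ← hA, ← hB]
      rw [if_pos (show 0 < i ∧ A ≤ t ∧ t ≤ B from c1)]
    have m2d : ∀ t ∈ Set.Ioo B C, hatFn x n i t * biorthFn x n i t
        = ((C-t)/(C-B)) * ((2*(t-C)+(t-B))/(B-C)) := by
      intro t ht
      have c1 : ¬(0 < i ∧ x (i-1) ≤ t ∧ t ≤ x i) := by
        rintro ⟨_, _, hlt⟩; rw [← hB] at hlt; linarith [ht.1]
      have c2 : i < n ∧ x i ≤ t ∧ t ≤ x (i+1) := ⟨h2, by rw [← hB]; exact ht.1.le, by rw [← hC]; exact ht.2.le⟩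
      rw [hbm2 t ht]
      simp only [hatFn, if_neg c1, if_pos c2, ← hB, ← hC]
      rw [if_neg (show ¬(0 < i ∧ x (i-1) ≤ t ∧ t ≤ B) from c1), if_pos (show i < n ∧ B ≤ t ∧ t ≤ C from c2)]
    have J1 : IntervalIntegrable (fun t => hatFn x n i t * biorthFn x n i t) MeasureTheory.volume (x 0) A :=
      intII h0A continuous_const z1d
    have J2 : IntervalIntegrable (fun t => hatFn x n i t * biorthFn x n i t) MeasureTheory.volume A B :=
      intII hAB.le (by fun_prop) m1d
    have J3 : IntervalIntegrable (fun t => hatFn x n i t * biorthFn x n i t) MeasureTheory.volume B C :=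
      intII hBC.le (by fun_prop) m2d
    have J4 : IntervalIntegrable (fun t => hatFn x n i t * biorthFn x n i t) MeasureTheory.volume C (x n) :=
      intII hCn continuous_const z2d
    have hD : (∫ t in (x 0)..(x n), hatFn x n i t * biorthFn x n i t)
        = (B-A)/2 + (C-B)/2 := by
      rw [← intervalIntegral.integral_add_adjacent_intervals J1 ((J2.trans J3).trans J4),
          ← intervalIntegral.integral_add_adjacent_intervals J2 (J3.trans J4),
          ← intervalIntegral.integral_add_adjacent_intervals J3 J4,
          intEq h0A z1d, intEq hAB.le m1d, intEq hBC.le m2d, intEq hCn z2d,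
          pieceC A B hAB, pieceD B C hBC]
      simp
    unfold recGrad
    rw [hN, hD, hs1, hs2, hu]
    have hABne : B - A ≠ 0 := sub_ne_zero.mpr hAB.ne'
    have hBCne : C - B ≠ 0 := sub_ne_zero.mpr hBC.ne'
    have hCAne : C - A ≠ 0 := by intro h; rw [sub_eq_zero] at h; linarith
    have hden : (B-A)/2 + (C-B)/2 ≠ 0 := (by linarith : (0:ℝ) < (B-A)/2 + (C-B)/2).ne'
    simp only []
    field_simp
    ring_nf
    have hCA' : -A + C ≠ 0 := by rwa [neg_add_eq_sub]
    field_simp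
    ring
  · -- i = 0
    have h01 : x 0 < x 1 := hx 0 (by omega)
    have h1n : x 1 ≤ x n := (hAne 1 n (by omega) le_rfl).le
    set s0 : ℝ := (u (x 1) - u (x 0)) / (x 1 - x 0) with hs0
    have c1gen : ∀ t : ℝ, ¬(0 < 0 ∧ x (0-1) ≤ t ∧ t < x 0) := by
      rintro t ⟨h, _, _⟩; exact absurd h (lt_irrefl 0)
    have hbz : ∀ t ∈ Set.Ioo (x 1) (x n), biorthFn x n 0 t = 0 := by
      intro t ht
      have c2 : ¬(0 < n ∧ x 0 ≤ t ∧ t < x (0+1)) := by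
        rintro ⟨_, _, hlt⟩; exact absurd hlt (not_lt.mpr ht.1.le)
      simp only [biorthFn, if_neg (c1gen t), if_neg c2]
    have hbm : ∀ t ∈ Set.Ioo (x 0) (x 1), biorthFn x n 0 t
        = (2*(t - x 1) + (t - x 0)) / (x 0 - x 1) := by
      intro t ht
      have c2 : 0 < n ∧ x 0 ≤ t ∧ t < x (0+1) := ⟨by omega, ht.1.le, ht.2⟩
      simp only [biorthFn, if_neg (c1gen t), if_pos c2]
    have z : ∀ t ∈ Set.Ioo (x 1) (x n), interpDeriv x n u t * biorthFn x n 0 t = 0 := by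
      intro t ht; rw [hbz t ht, mul_zero]
    have m : ∀ t ∈ Set.Ioo (x 0) (x 1), interpDeriv x n u t * biorthFn x n 0 t
        = s0 * ((2*(t - x 1) + (t - x 0)) / (x 0 - x 1)) := by
      intro t ht
      rw [hinterp 0 (by omega) t ht, hbm t ht, hs0]
    have I1 : IntervalIntegrable (fun t => interpDeriv x n u t * biorthFn x n 0 t) MeasureTheory.volume (x 0) (x 1) :=
      intII h01.le (by fun_prop) m
    have I2 : IntervalIntegrable (fun t => interpDeriv x n u t * biorthFn x n 0 t) MeasureTheory.volume (x 1) (x n) :=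
      intII h1n continuous_const z
    have hN : (∫ t in (x 0)..(x n), interpDeriv x n u t * biorthFn x n 0 t)
        = s0 * (x 1 - x 0) / 2 := by
      rw [← intervalIntegral.integral_add_adjacent_intervals I1 I2,
          intEq h01.le m, intEq h1n z, pieceB s0 (x 0) (x 1) h01]
      simp
    have zd : ∀ t ∈ Set.Ioo (x 1) (x n), hatFn x n 0 t * biorthFn x n 0 t = 0 := by
      intro t ht; rw [hbz t ht, mul_zero]
    have md : ∀ t ∈ Set.Ioo (x 0) (x 1), hatFn x n 0 t * biorthFn x n 0 t
        = ((x 1 - t)/(x 1 - x 0)) * ((2*(t - x 1) + (t - x 0)) / (x 0 - x 1)) := by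
      intro t ht
      have c1 : ¬(0 < 0 ∧ x (0-1) ≤ t ∧ t ≤ x 0) := by
        rintro ⟨h, _, _⟩; exact absurd h (lt_irrefl 0)
      have c2 : 0 < n ∧ x 0 ≤ t ∧ t ≤ x (0+1) := ⟨by omega, ht.1.le, ht.2.le⟩
      rw [hbm t ht]
      simp only [hatFn, if_neg c1, if_pos c2]
    have J1 : IntervalIntegrable (fun t => hatFn x n 0 t * biorthFn x n 0 t) MeasureTheory.volume (x 0) (x 1) :=
      intII h01.le (by fun_prop) md
    have J2 : IntervalIntegrable (fun t => hatFn x n 0 t * biorthFn x n 0 t) MeasureTheory.volume (x 1) (x n) :=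
      intII h1n continuous_const zd
    have hD : (∫ t in (x 0)..(x n), hatFn x n 0 t * biorthFn x n 0 t)
        = (x 1 - x 0) / 2 := by
      rw [← intervalIntegral.integral_add_adjacent_intervals J1 J2,
          intEq h01.le md, intEq h1n zd, pieceD (x 0) (x 1) h01]
      simp
    unfold recGrad
    rw [hN, hD, hs0, hu]
    have hne : x 1 - x 0 ≠ 0 := sub_ne_zero.mpr h01.ne'
    simp only []
    field_simp
    ring
  · -- i = n
    have hn1 : n - 1 + 1 = n := by omega
    have hAB : x (n-1) < x n := by
      have := hx (n-1) (by omega); rwa [hn1] at this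
    have h0A : x 0 ≤ x (n-1) := (hAne 0 (n-1) (by omega) (by omega)).le
    set sn : ℝ := (u (x n) - u (x (n-1))) / (x n - x (n-1)) with hsn
    have c2gen : ∀ t : ℝ, ¬(n < n ∧ x n ≤ t ∧ t < x (n+1)) := by
      rintro t ⟨h, _⟩; exact absurd h (lt_irrefl n)
    have hbz : ∀ t ∈ Set.Ioo (x 0) (x (n-1)), biorthFn x n n t = 0 := by
      intro t ht
      have c1 : ¬(0 < n ∧ x (n-1) ≤ t ∧ t < x n) := by
        rintro ⟨_, hle, _⟩; linarith [ht.2]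
      simp only [biorthFn, if_neg c1, if_neg (c2gen t)]
    have hbm : ∀ t ∈ Set.Ioo (x (n-1)) (x n), biorthFn x n n t
        = (2*(t - x (n-1)) + (t - x n)) / (x n - x (n-1)) := by
      intro t ht
      have c1 : 0 < n ∧ x (n-1) ≤ t ∧ t < x n := ⟨by omega, ht.1.le, ht.2⟩
      simp only [biorthFn, if_pos c1]
    have z : ∀ t ∈ Set.Ioo (x 0) (x (n-1)), interpDeriv x n u t * biorthFn x n n t = 0 := by
      intro t ht; rw [hbz t ht, mul_zero]
    have m : ∀ t ∈ Set.Ioo (x (n-1)) (x n), interpDeriv x n u t * biorthFn x n n t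
        = sn * ((2*(t - x (n-1)) + (t - x n)) / (x n - x (n-1))) := by
      intro t ht
      have hI := hinterp (n-1) (by omega) t (by rw [hn1]; exact ht)
      rw [hn1] at hI
      rw [hI, hbm t ht, hsn]
    have I1 : IntervalIntegrable (fun t => interpDeriv x n u t * biorthFn x n n t) MeasureTheory.volume (x 0) (x (n-1)) :=
      intII h0A continuous_const z
    have I2 : IntervalIntegrable (fun t => interpDeriv x n u t * biorthFn x n n t) MeasureTheory.volume (x (n-1)) (x n) :=
      intII hAB.le (by fun_prop) m
    have hN : (∫ t in (x 0)..(x n), interpDeriv x n u t * biorthFn x n n t)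
        = sn * (x n - x (n-1)) / 2 := by
      rw [← intervalIntegral.integral_add_adjacent_intervals I1 I2,
          intEq h0A z, intEq hAB.le m, pieceA sn (x (n-1)) (x n) hAB]
      simp
    have zd : ∀ t ∈ Set.Ioo (x 0) (x (n-1)), hatFn x n n t * biorthFn x n n t = 0 := by
      intro t ht; rw [hbz t ht, mul_zero]
    have md : ∀ t ∈ Set.Ioo (x (n-1)) (x n), hatFn x n n t * biorthFn x n n t
        = ((t - x (n-1))/(x n - x (n-1))) * ((2*(t - x (n-1)) + (t - x n)) / (x n - x (n-1))) := by
      intro t ht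
      have c1 : 0 < n ∧ x (n-1) ≤ t ∧ t ≤ x n := ⟨by omega, ht.1.le, ht.2.le⟩
      rw [hbm t ht]
      simp only [hatFn, if_pos c1]
    have J1 : IntervalIntegrable (fun t => hatFn x n n t * biorthFn x n n t) MeasureTheory.volume (x 0) (x (n-1)) :=
      intII h0A continuous_const zd
    have J2 : IntervalIntegrable (fun t => hatFn x n n t * biorthFn x n n t) MeasureTheory.volume (x (n-1)) (x n) :=
      intII hAB.le (by fun_prop) md
    have hD : (∫ t in (x 0)..(x n), hatFn x n n t * biorthFn x n n t)
        = (x n - x (n-1)) / 2 := by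
      rw [← intervalIntegral.integral_add_adjacent_intervals J1 J2,
          intEq h0A zd, intEq hAB.le md, pieceC (x (n-1)) (x n) hAB]
      simp
    unfold recGrad
    rw [hN, hD, hsn, hu]
    have hne : x n - x (n-1) ≠ 0 := sub_ne_zero.mpr hAB.ne'
    simp only []
    field_simp
    ring
end

section
/- (Remark, superapproximation for quadratics under the mesh condition) Let u(x) = a x² + b x + c with a, b, c ∈ ℝ, let h_i = x_{i+1} − x_i for 0 ≤ i ≤ n−1, and let h = max_{0 ≤ i ≤ n−1} h_i. If |h_i − h_{i−1}| ≤ K h² for all 1 ≤ i ≤ n−1 and some K > 0, then for every interior index 1 ≤ i ≤ n−1 one has |g_i − u'(x_i)| ≤ |a| K h². -/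
open intervalIntegral

open MeasureTheory in
private lemma ae_ne_point (b : ℝ) : ∀ᵐ t : ℝ, t ≠ b := by
  rw [ae_iff]
  have h : {t : ℝ | ¬ t ≠ b} = {b} := by ext t; simp
  rw [h]
  exact measure_singleton b

open MeasureTheory in
private lemma II_of_poly {f : ℝ → ℝ} {a b A B C : ℝ} (hab : a ≤ b)
    (h : ∀ t ∈ Set.Ioo a b, f t = A * t ^ 2 + B * t + C) :
    IntervalIntegrable f volume a b := by
  have hcont : Continuous fun t : ℝ => A * t ^ 2 + B * t + C := by continuity
  have hg : IntervalIntegrable (fun t : ℝ => A * t ^ 2 + B * t + C) volume a b :=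
    hcont.intervalIntegrable a b
  rw [intervalIntegrable_iff, Set.uIoc_of_le hab] at hg ⊢
  refine hg.congr ((MeasureTheory.ae_restrict_iff' measurableSet_Ioc).2 ?_)
  filter_upwards [ae_ne_point b] with t htb hmem
  exact (h t ⟨hmem.1, lt_of_le_of_ne hmem.2 htb⟩).symm

private lemma integral_poly_Ioo {f : ℝ → ℝ} {a b A B C : ℝ} (hab : a ≤ b)
    (h : ∀ t ∈ Set.Ioo a b, f t = A * t ^ 2 + B * t + C) :
    ∫ t in a..b, f t = A * (b ^ 3 - a ^ 3) / 3 + B * (b ^ 2 - a ^ 2) / 2 + C * (b - a) := by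
  have hae : ∀ᵐ t : ℝ, t ∈ Set.uIoc a b → f t = A * t ^ 2 + B * t + C := by
    filter_upwards [ae_ne_point b] with t htb hmem
    rw [Set.uIoc_of_le hab] at hmem
    exact h t ⟨hmem.1, lt_of_le_of_ne hmem.2 htb⟩
  rw [intervalIntegral.integral_congr_ae hae]
  have i1 : IntervalIntegrable (fun t : ℝ => A * t ^ 2) MeasureTheory.volume a b := by
    apply Continuous.intervalIntegrable; continuity
  have i2 : IntervalIntegrable (fun t : ℝ => B * t) MeasureTheory.volume a b := by
    apply Continuous.intervalIntegrable; continuity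
  have i3 : IntervalIntegrable (fun _ : ℝ => C) MeasureTheory.volume a b :=
    intervalIntegrable_const
  rw [intervalIntegral.integral_add (i1.add i2) i3, intervalIntegral.integral_add i1 i2,
    intervalIntegral.integral_const_mul, intervalIntegral.integral_const_mul,
    integral_pow, integral_id, integral_const]
  norm_num
  ring

private lemma num_piece_left (p q d : ℝ) (hpq : p < q) {f : ℝ → ℝ}
    (hf : ∀ t ∈ Set.Ioo p q, f t = d * ((2*(t - p) + (t - q)) / (q - p))) :
    IntervalIntegrable f MeasureTheory.volume p q ∧ ∫ t in p..q, f t = d * (q - p) / 2 := by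
  have hne : q - p ≠ 0 := sub_ne_zero.mpr hpq.ne'
  have e : ∀ t ∈ Set.Ioo p q, f t
      = (0:ℝ) * t ^ 2 + (3 * d / (q - p)) * t + (-(d * (2 * p + q)) / (q - p)) := by
    intro t ht
    rw [hf t ht]
    field_simp
    ring
  refine ⟨II_of_poly hpq.le e, ?_⟩
  rw [integral_poly_Ioo hpq.le e]
  field_simp
  ring

private lemma num_piece_right (q r d : ℝ) (hqr : q < r) {f : ℝ → ℝ}
    (hf : ∀ t ∈ Set.Ioo q r, f t = d * ((2*(t - r) + (t - q)) / (q - r))) :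
    IntervalIntegrable f MeasureTheory.volume q r ∧ ∫ t in q..r, f t = d * (r - q) / 2 := by
  have hne : q - r ≠ 0 := sub_ne_zero.mpr hqr.ne
  have hne' : r - q ≠ 0 := sub_ne_zero.mpr hqr.ne'
  have e : ∀ t ∈ Set.Ioo q r, f t
      = (0:ℝ) * t ^ 2 + (3 * d / (q - r)) * t + (-(d * (2 * r + q)) / (q - r)) := by
    intro t ht
    rw [hf t ht]
    field_simp
    ring
  refine ⟨II_of_poly hqr.le e, ?_⟩
  rw [integral_poly_Ioo hqr.le e]
  field_simp
  ring

private lemma den_piece_left (p q : ℝ) (hpq : p < q) {f : ℝ → ℝ}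
    (hf : ∀ t ∈ Set.Ioo p q, f t = ((t - p) / (q - p)) * ((2*(t - p) + (t - q)) / (q - p))) :
    IntervalIntegrable f MeasureTheory.volume p q ∧ ∫ t in p..q, f t = (q - p) / 2 := by
  have hne : q - p ≠ 0 := sub_ne_zero.mpr hpq.ne'
  have e : ∀ t ∈ Set.Ioo p q, f t
      = (3 / (q - p) ^ 2) * t ^ 2 + (-(5 * p + q) / (q - p) ^ 2) * t
        + ((2 * p ^ 2 + p * q) / (q - p) ^ 2) := by
    intro t ht
    rw [hf t ht]
    field_simp
    ring
  refine ⟨II_of_poly hpq.le e, ?_⟩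
  rw [integral_poly_Ioo hpq.le e]
  field_simp
  ring

private lemma den_piece_right (q r : ℝ) (hqr : q < r) {f : ℝ → ℝ}
    (hf : ∀ t ∈ Set.Ioo q r, f t = ((r - t) / (r - q)) * ((2*(t - r) + (t - q)) / (q - r))) :
    IntervalIntegrable f MeasureTheory.volume q r ∧ ∫ t in q..r, f t = (r - q) / 2 := by
  have hne : q - r ≠ 0 := sub_ne_zero.mpr hqr.ne
  have hne' : r - q ≠ 0 := sub_ne_zero.mpr hqr.ne'
  have e : ∀ t ∈ Set.Ioo q r, f t
      = (3 / (r - q) ^ 2) * t ^ 2 + (-(5 * r + q) / (r - q) ^ 2) * t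
        + ((2 * r ^ 2 + q * r) / (r - q) ^ 2) := by
    intro t ht
    rw [hf t ht]
    field_simp
    ring
  refine ⟨II_of_poly hqr.le e, ?_⟩
  rw [integral_poly_Ioo hqr.le e]
  field_simp
  ring

private lemma zero_piece (a b : ℝ) (hab : a ≤ b) {f : ℝ → ℝ}
    (hf : ∀ t ∈ Set.Ioo a b, f t = 0) :
    IntervalIntegrable f MeasureTheory.volume a b ∧ ∫ t in a..b, f t = 0 := by
  have e : ∀ t ∈ Set.Ioo a b, f t = (0:ℝ) * t ^ 2 + 0 * t + 0 := by
    intro t ht; rw [hf t ht]; ring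
  refine ⟨II_of_poly hab e, ?_⟩
  rw [integral_poly_Ioo hab e]
  ring
/-- superapproximation for quadratics under the mesh condition: for
`u(x) = a x² + b x + c`, with `h_i = x_{i+1} - x_i` and `h = max_i h_i`, if
`|h_i - h_{i-1}| ≤ K h²` for all `1 ≤ i ≤ n-1` and some `K > 0`, then for every interior
index `1 ≤ i ≤ n-1`, `|g_i - u'(x_i)| ≤ |a| K h²`. -/
theorem recGrad_quadratic_superapprox (n : ℕ) (x : ℕ → ℝ) (hn : 2 ≤ n)
    (hx : ∀ i < n, x i < x (i+1)) (a b c : ℝ) (K h : ℝ) (hK : 0 < K)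
    (hub : ∀ i < n, x (i+1) - x i ≤ h)
    (hmem : ∃ i < n, x (i+1) - x i = h)
    (hmesh : ∀ i : ℕ, 1 ≤ i → i < n →
      |(x (i+1) - x i) - (x i - x (i-1))| ≤ K * h^2) :
    ∀ i : ℕ, 1 ≤ i → i < n →
      |recGrad x n (fun t => a * t^2 + b * t + c) i - (2 * a * x i + b)|
        ≤ |a| * K * h^2 := by
  intro i h1i hin
  obtain ⟨m, rfl⟩ : ∃ m, i = m + 1 := ⟨i - 1, by omega⟩
  have hmn : m < n := by omega
  have hpq : x m < x (m + 1) := hx m hmn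
  have hqr : x (m + 1) < x (m + 1 + 1) := hx (m + 1) hin
  have hmono : ∀ j : ℕ, j ≤ n → ∀ l : ℕ, l ≤ j → x l ≤ x j := by
    intro j
    induction j with
    | zero => intro _ l hl; obtain rfl : l = 0 := Nat.le_zero.mp hl; exact le_rfl
    | succ k ih =>
      intro hk l hl
      rcases eq_or_lt_of_le hl with rfl | hl'
      · exact le_rfl
      · exact (ih (by omega) l (by omega)).trans (hx k (by omega)).le
  set u : ℝ → ℝ := fun t => a * t ^ 2 + b * t + c with hu
  -- evaluation of interpDeriv on open subintervals
  have hD : ∀ k, k < n → ∀ t ∈ Set.Ioo (x k) (x (k + 1)),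
      interpDeriv x n u t = (u (x (k + 1)) - u (x k)) / (x (k + 1) - x k) := by
    intro k hk t ht
    unfold interpDeriv
    rw [Finset.sum_eq_single k]
    · rw [if_pos ⟨ht.1, ht.2⟩]
    · intro j hj hjk
      rw [if_neg]
      rintro ⟨hl, hr⟩
      rcases lt_or_gt_of_ne hjk with hlt | hgt
      · have h1 : x (j + 1) ≤ x k := hmono k hk.le (j + 1) hlt
        exact absurd hr (not_lt.mpr (h1.trans ht.1.le))
      · have h1 : x (k + 1) ≤ x j := hmono j (Nat.le_of_lt (Finset.mem_range.mp hj)) (k + 1) hgt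
        exact absurd hl (not_lt.mpr ((ht.2.trans_le h1)).le)
    · intro hk'; exact absurd (Finset.mem_range.mpr hk) hk'
  -- evaluation of biorthFn
  have hBL : ∀ t ∈ Set.Ioo (x m) (x (m + 1)), biorthFn x n (m + 1) t
      = (2 * (t - x m) + (t - x (m + 1))) / (x (m + 1) - x m) := by
    intro t ht
    simp only [biorthFn, Nat.add_sub_cancel]
    rw [if_pos ⟨Nat.succ_pos m, ht.1.le, ht.2⟩]
  have hBR : ∀ t ∈ Set.Ioo (x (m + 1)) (x (m + 1 + 1)), biorthFn x n (m + 1) t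
      = (2 * (t - x (m + 1 + 1)) + (t - x (m + 1))) / (x (m + 1) - x (m + 1 + 1)) := by
    intro t ht
    simp only [biorthFn, Nat.add_sub_cancel]
    rw [if_neg (fun hc => absurd hc.2.2 (not_lt.mpr ht.1.le)), if_pos ⟨hin, ht.1.le, ht.2⟩]
  have hB0 : ∀ k, k < n → k ≠ m → k ≠ m + 1 →
      ∀ t ∈ Set.Ioo (x k) (x (k + 1)), biorthFn x n (m + 1) t = 0 := by
    intro k hk hk1 hk2 t ht
    simp only [biorthFn, Nat.add_sub_cancel]
    rcases Nat.lt_or_ge k m with hlt | hge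
    · have h1 : x (k + 1) ≤ x m := hmono m (by omega) (k + 1) (by omega)
      have ht1 : t < x m := ht.2.trans_le h1
      have hc1 : ¬(0 < m + 1 ∧ x m ≤ t ∧ t < x (m + 1)) := by
        rintro ⟨-, h2, -⟩; exact absurd h2 (not_le.mpr ht1)
      have hc2 : ¬(m + 1 < n ∧ x (m + 1) ≤ t ∧ t < x (m + 1 + 1)) := by
        rintro ⟨-, h2, -⟩; exact absurd h2 (not_le.mpr (ht1.trans hpq))
      rw [if_neg hc1, if_neg hc2]
    · have hk' : m + 2 ≤ k := by omega
      have h1 : x (m + 2) ≤ x k := hmono k hk.le (m + 2) hk'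
      have ht1 : x (m + 1 + 1) < t := h1.trans_lt ht.1
      have hc1 : ¬(0 < m + 1 ∧ x m ≤ t ∧ t < x (m + 1)) := by
        rintro ⟨-, -, h2⟩; exact absurd h2 (not_lt.mpr (hqr.le.trans ht1.le))
      have hc2 : ¬(m + 1 < n ∧ x (m + 1) ≤ t ∧ t < x (m + 1 + 1)) := by
        rintro ⟨-, -, h2⟩; exact absurd h2 (not_lt.mpr ht1.le)
      rw [if_neg hc1, if_neg hc2]
  -- evaluation of hatFn
  have hHL : ∀ t ∈ Set.Ioo (x m) (x (m + 1)), hatFn x n (m + 1) t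
      = (t - x m) / (x (m + 1) - x m) := by
    intro t ht
    simp only [hatFn, Nat.add_sub_cancel]
    rw [if_pos ⟨Nat.succ_pos m, ht.1.le, ht.2.le⟩]
  have hHR : ∀ t ∈ Set.Ioo (x (m + 1)) (x (m + 1 + 1)), hatFn x n (m + 1) t
      = (x (m + 1 + 1) - t) / (x (m + 1 + 1) - x (m + 1)) := by
    intro t ht
    simp only [hatFn, Nat.add_sub_cancel]
    rw [if_neg (fun hc => absurd hc.2.2 (not_le.mpr ht.1)), if_pos ⟨hin, ht.1.le, ht.2.le⟩]
  -- numerator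
  have hIN : ∀ k < n, IntervalIntegrable
      (fun t => interpDeriv x n u t * biorthFn x n (m + 1) t)
      MeasureTheory.volume (x k) (x (k + 1)) := by
    intro k hk
    rcases eq_or_ne k m with rfl | hk1
    · exact (num_piece_left _ _ _ hpq (fun t ht => by rw [hD k hk t ht, hBL t ht])).1
    rcases eq_or_ne k (m + 1) with rfl | hk2
    · exact (num_piece_right _ _ _ hqr (fun t ht => by rw [hD (m + 1) hin t ht, hBR t ht])).1
    · exact (zero_piece _ _ (hx k hk).le
        (fun t ht => by rw [hB0 k hk hk1 hk2 t ht, mul_zero])).1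
  have hNum : (∫ t in (x 0)..(x n), interpDeriv x n u t * biorthFn x n (m + 1) t)
      = (u (x (m + 1)) - u (x m)) / (x (m + 1) - x m) * (x (m + 1) - x m) / 2
        + (u (x (m + 1 + 1)) - u (x (m + 1))) / (x (m + 1 + 1) - x (m + 1))
          * (x (m + 1 + 1) - x (m + 1)) / 2 := by
    have hsub : ({m, m + 1} : Finset ℕ) ⊆ Finset.range n := by
      intro k hk
      simp only [Finset.mem_insert, Finset.mem_singleton] at hk
      rw [Finset.mem_range]
      rcases hk with rfl | rfl
      · exact hmn
      · exact hin
    have hzero : ∀ k ∈ Finset.range n, k ∉ ({m, m + 1} : Finset ℕ) →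
        (∫ t in (x k)..(x (k + 1)), interpDeriv x n u t * biorthFn x n (m + 1) t) = 0 := by
      intro k hk hk'
      simp only [Finset.mem_insert, Finset.mem_singleton] at hk'
      push_neg at hk'
      exact (zero_piece _ _ (hx k (Finset.mem_range.mp hk)).le
        (fun t ht => by
          rw [hB0 k (Finset.mem_range.mp hk) hk'.1 hk'.2 t ht, mul_zero])).2
    rw [← intervalIntegral.sum_integral_adjacent_intervals hIN,
      ← Finset.sum_subset hsub hzero, Finset.sum_pair (by omega : m ≠ m + 1),
      (num_piece_left _ _ _ hpq (fun t ht => by rw [hD m hmn t ht, hBL t ht])).2,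
      (num_piece_right _ _ _ hqr (fun t ht => by rw [hD (m + 1) hin t ht, hBR t ht])).2]
  -- denominator
  have hID : ∀ k < n, IntervalIntegrable
      (fun t => hatFn x n (m + 1) t * biorthFn x n (m + 1) t)
      MeasureTheory.volume (x k) (x (k + 1)) := by
    intro k hk
    rcases eq_or_ne k m with rfl | hk1
    · exact (den_piece_left _ _ hpq (fun t ht => by rw [hHL t ht, hBL t ht])).1
    rcases eq_or_ne k (m + 1) with rfl | hk2
    · exact (den_piece_right _ _ hqr (fun t ht => by rw [hHR t ht, hBR t ht])).1
    · exact (zero_piece _ _ (hx k hk).le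
        (fun t ht => by rw [hB0 k hk hk1 hk2 t ht, mul_zero])).1
  have hDen : (∫ t in (x 0)..(x n), hatFn x n (m + 1) t * biorthFn x n (m + 1) t)
      = (x (m + 1) - x m) / 2 + (x (m + 1 + 1) - x (m + 1)) / 2 := by
    have hsub : ({m, m + 1} : Finset ℕ) ⊆ Finset.range n := by
      intro k hk
      simp only [Finset.mem_insert, Finset.mem_singleton] at hk
      rw [Finset.mem_range]
      rcases hk with rfl | rfl
      · exact hmn
      · exact hin
    have hzero : ∀ k ∈ Finset.range n, k ∉ ({m, m + 1} : Finset ℕ) →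
        (∫ t in (x k)..(x (k + 1)), hatFn x n (m + 1) t * biorthFn x n (m + 1) t) = 0 := by
      intro k hk hk'
      simp only [Finset.mem_insert, Finset.mem_singleton] at hk'
      push_neg at hk'
      exact (zero_piece _ _ (hx k (Finset.mem_range.mp hk)).le
        (fun t ht => by
          rw [hB0 k (Finset.mem_range.mp hk) hk'.1 hk'.2 t ht, mul_zero])).2
    rw [← intervalIntegral.sum_integral_adjacent_intervals hID,
      ← Finset.sum_subset hsub hzero, Finset.sum_pair (by omega : m ≠ m + 1),
      (den_piece_left _ _ hpq (fun t ht => by rw [hHL t ht, hBL t ht])).2,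
      (den_piece_right _ _ hqr (fun t ht => by rw [hHR t ht, hBR t ht])).2]
  -- final algebra
  have hne1 : x (m + 1) - x m ≠ 0 := sub_ne_zero.mpr hpq.ne'
  have hne2 : x (m + 1 + 1) - x (m + 1) ≠ 0 := sub_ne_zero.mpr hqr.ne'
  have hS : (x (m + 1) - x m) / 2 + (x (m + 1 + 1) - x (m + 1)) / 2 ≠ 0 := by
    have hpos : 0 < (x (m + 1) - x m) / 2 + (x (m + 1 + 1) - x (m + 1)) / 2 := by linarith
    exact hpos.ne'
  have hne3 : x (m + 1 + 1) - x m ≠ 0 := sub_ne_zero.mpr (hpq.trans hqr).ne'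
  have key : recGrad x n u (m + 1) - (2 * a * x (m + 1) + b)
      = a * ((x (m + 1 + 1) - x (m + 1)) - (x (m + 1) - x m)) := by
    unfold recGrad
    rw [hNum, hDen]
    simp only [hu]
    field_simp [hne1, hne2, hne3, hS]
    ring
  have hM := hmesh (m + 1) (by omega) hin
  simp only [Nat.add_sub_cancel] at hM
  calc |recGrad x n u (m + 1) - (2 * a * x (m + 1) + b)|
      = |a| * |(x (m + 1 + 1) - x (m + 1)) - (x (m + 1) - x m)| := by rw [key, abs_mul]
    _ ≤ |a| * (K * h ^ 2) := mul_le_mul_of_nonneg_left hM (abs_nonneg a)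
    _ = |a| * K * h ^ 2 := by ring
end
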